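/- arXiv:1106.0774 — 6 statements merged into one kernel-verified Lean document; each statement's English description precedes it below -/
import Mathlib

section
/- If kQ/I is a gentle string algebra such that the quiver Q has neither loops nor oriented cycles, then there exists a coloring c of Q (a map c: Q_1 → S to a finite set such that the preimage of each color is a directed path) for which the ideal I_c generated by all monochromatic length-2 paths equals I. -/
open Relation Classical

namespace GentleAux

variable {V A : Type} (src tgt : A → V) (R : Set (A × A))

/-- step in the quiver -/
def QStep (x y : V) : Prop := ∃ a, src a = x ∧ tgt a = y

/-- `F a b` : `b` is the successor of `a`, i.e. the path `ab` (first `a` then `b`) is in `I`. -/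
def F (a b : A) : Prop := (b, a) ∈ R

variable {src tgt R}
variable (hcomp : ∀ p ∈ R, tgt p.2 = src p.1)
  (hacyc : ∀ x : V, ¬ Relation.TransGen (QStep src tgt) x x)

include hcomp in
theorem F_to_Q {a b : A} (h : F R a b) : QStep src tgt (src a) (src b) :=
  ⟨a, rfl, hcomp _ h⟩

include hcomp hacyc in
theorem transF_irrefl (a : A) : ¬ Relation.TransGen (F R) a a := fun h =>
  hacyc (src a) (h.lift src (fun _ _ hb => F_to_Q hcomp hb))

include hcomp hacyc in
theorem transFswap_irrefl (a : A) : ¬ Relation.TransGen (Function.swap (F R)) a a :=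
  fun h => transF_irrefl hcomp hacyc a (Relation.transGen_swap.mp h)

theorem wf_of_irrefl [Fintype A] (r : A → A → Prop)
    (h : ∀ a, ¬ Relation.TransGen r a a) : WellFounded r := by
  have : IsIrrefl A (Relation.TransGen r) := ⟨h⟩
  have := Finite.wellFounded_of_trans_of_irrefl (Relation.TransGen r)
  exact Subrelation.wf (fun hx => Relation.TransGen.single hx) this

variable [Fintype A]

include hcomp hacyc in
theorem wfF : WellFounded (F R) :=
  wf_of_irrefl _ (transF_irrefl hcomp hacyc)

include hcomp hacyc in
theorem wfFswap : WellFounded (Function.swap (F R)) :=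
  wf_of_irrefl _ (transFswap_irrefl hcomp hacyc)

end GentleAux

namespace GentleAux

variable {V A : Type} {src tgt : A → V} {R : Set (A × A)} [Fintype A]

open Classical

/-- The first arrow of the chain of `a`: iterate predecessors. -/
noncomputable def root (wf : WellFounded (F R)) : A → A :=
  wf.fix (fun a ih => if h : ∃ b, (a, b) ∈ R then ih (choose h) (choose_spec h) else a)

theorem root_eq (wf : WellFounded (F R)) (a : A) :
    root wf a = if h : ∃ b, (a, b) ∈ R then root wf (choose h) else a := by
  unfold root
  rw [WellFounded.fix_eq]

/-- The chain of arrows starting at `a`: iterate successors. -/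
noncomputable def chain (wf : WellFounded (Function.swap (F R))) : A → List A :=
  wf.fix (fun a ih =>
    a :: (if h : ∃ b, (b, a) ∈ R then ih (choose h) (choose_spec h) else []))

theorem chain_eq (wf : WellFounded (Function.swap (F R))) (a : A) :
    chain wf a = a ::
      (if h : ∃ b, (b, a) ∈ R then chain wf (choose h) else []) := by
  unfold chain
  rw [WellFounded.fix_eq]

end GentleAux

namespace GentleAux

variable {V A : Type} {src tgt : A → V} {R : Set (A × A)} [Fintype A]

section lemmas

variable (hcomp : ∀ p ∈ R, tgt p.2 = src p.1)
  (hsu : ∀ {x y b : A}, (x, b) ∈ R → (y, b) ∈ R → x = y)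
  (hpu : ∀ {b x y : A}, (b, x) ∈ R → (b, y) ∈ R → x = y)
  (wf : WellFounded (F R)) (wf' : WellFounded (Function.swap (F R)))

include hsu in
theorem rightUniqueF : Relator.RightUnique (F R) := fun _ _ _ h1 h2 => hsu h1 h2

theorem root_no_pred (a : A) : ¬ ∃ b, (root wf a, b) ∈ R := by
  induction a using wf.induction with
  | _ a ih =>
    rw [root_eq]
    split
    · next h => exact ih (choose h) (choose_spec h)
    · next h => exact h

theorem rtg_root (a : A) : Relation.ReflTransGen (F R) (root wf a) a := by
  induction a using wf.induction with
  | _ a ih =>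
    rw [root_eq]
    split
    · next h => exact (ih (choose h) (choose_spec h)).tail (choose_spec h)
    · exact Relation.ReflTransGen.refl

include hpu in
theorem root_R {a b : A} (hab : (a, b) ∈ R) : root wf a = root wf b := by
  rw [root_eq]
  have h : ∃ c, (a, c) ∈ R := ⟨b, hab⟩
  rw [dif_pos h, hpu (choose_spec h) hab]

include hsu in
theorem mem_chain_iff {s x : A} :
    x ∈ chain wf' s ↔ Relation.ReflTransGen (F R) s x := by
  constructor
  · intro hx
    induction s using wf'.induction with
    | _ s ih =>
      rw [chain_eq] at hx
      rcases List.mem_cons.mp hx with rfl | hx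
      · exact Relation.ReflTransGen.refl
      · split at hx
        · next h =>
            exact (ih (choose h) (choose_spec h) hx).head (choose_spec h)
        · simp at hx
  · intro hx
    induction hx using Relation.ReflTransGen.head_induction_on with
    | refl => rw [chain_eq]; exact List.mem_cons_self
    | head hac _ ihc =>
      next a c _ =>
      rw [chain_eq]
      have h : ∃ b, (b, a) ∈ R := ⟨c, hac⟩
      rw [dif_pos h, hsu (choose_spec h) hac]
      exact List.mem_cons_of_mem _ ihc

include hcomp hsu in
theorem chain_nodup (hacyc : ∀ x : V, ¬ Relation.TransGen (QStep src tgt) x x)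
    (s : A) : (chain wf' s).Nodup := by
  induction s using wf'.induction with
  | _ s ih =>
    rw [chain_eq]
    refine List.nodup_cons.mpr ⟨?_, ?_⟩
    · intro hs
      split at hs
      · next h =>
        have h1 : Relation.ReflTransGen (F R) (choose h) s :=
          (mem_chain_iff hsu wf').mp hs
        exact transF_irrefl hcomp hacyc s (Relation.TransGen.head' (choose_spec h) h1)
      · simp at hs
    · split
      · next h => exact ih (choose h) (choose_spec h)
      · simp

theorem chain_chain' (s : A) :
    List.Chain' (fun p q => (q, p) ∈ R) (chain wf' s) := by
  induction s using wf'.induction with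
  | _ s ih =>
    rw [chain_eq]
    rw [List.Chain', List.isChain_cons]
    constructor
    · intro y hy
      split at hy
      · next h =>
        rw [chain_eq] at hy
        simp only [List.head?_cons, Option.mem_def, Option.some.injEq] at hy
        rw [← hy]
        exact choose_spec h
      · simp at hy
    · split
      · next h => exact ih (choose h) (choose_spec h)
      · simp

include hsu hpu in
theorem root_eq_iff_mem_chain {s a : A} (hs : ¬ ∃ b, (s, b) ∈ R) :
    root wf a = s ↔ a ∈ chain wf' s := by
  rw [mem_chain_iff hsu wf']
  constructor
  · intro h
    have := rtg_root wf a
    rwa [h] at this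
  · intro h
    induction h with
    | refl => rw [root_eq, dif_neg hs]
    | tail _ hma ih => exact (root_R hpu wf hma).trans ih

end lemmas

end GentleAux

namespace GentleAux

set_option linter.unusedSectionVars false

variable {V A : Type} {src tgt : A → V} {R : Set (A × A)} [Fintype A]

theorem mono_to_R (hcomp : ∀ p ∈ R, tgt p.2 = src p.1)
    (hsu : ∀ {x y b : A}, (x, b) ∈ R → (y, b) ∈ R → x = y)
    (wf : WellFounded (F R))
    (hacyc : ∀ x : V, ¬ Relation.TransGen (QStep src tgt) x x)
    {a b : A} (hba : tgt b = src a)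
    (hroot : root wf b = root wf a) : (a, b) ∈ R := by
  have h1 : Relation.ReflTransGen (F R) (root wf a) a := rtg_root wf a
  have h2 : Relation.ReflTransGen (F R) (root wf a) b := hroot ▸ rtg_root wf b
  rcases Relation.ReflTransGen.total_of_right_unique (rightUniqueF hsu) h2 h1 with
    hba' | hab'
  · rcases hba'.cases_head with heq | ⟨m, hbm, hma⟩
    · subst heq; exact absurd (Relation.TransGen.single ⟨_, rfl, hba⟩) (hacyc _)
    · rcases hma.cases_head with rfl | ⟨k, hmk, hka⟩
      · exact hbm
      · exfalso
        have ht : Relation.TransGen (F R) m a := Relation.TransGen.head' hmk hka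
        have hq : Relation.TransGen (QStep src tgt) (src m) (src a) :=
          ht.lift src (fun _ _ h => F_to_Q hcomp h)
        have hsm : src m = src a := by rw [← hcomp _ hbm, hba]
        rw [hsm] at hq
        exact hacyc (src a) hq
  · rcases hab'.cases_head with heq | ⟨m, ham, hmb⟩
    · subst heq; exact absurd (Relation.TransGen.single ⟨_, rfl, hba⟩) (hacyc _)
    · exfalso
      have ht : Relation.TransGen (F R) a b := Relation.TransGen.head' ham hmb
      have hq : Relation.TransGen (QStep src tgt) (src a) (src b) :=
        ht.lift src (fun _ _ h => F_to_Q hcomp h)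
      exact hacyc (src a) (hq.tail ⟨b, rfl, hba⟩)

end GentleAux


section Quiver

variable {V A : Type} (src tgt : A → V)

/-- A set of arrows forms a directed path if it can be listed (without repetition)
as a composable sequence of arrows. -/
def IsDirPathSet (s : Set A) : Prop :=
  ∃ l : List A, l.Nodup ∧ l.Chain' (fun a b => tgt a = src b) ∧ ∀ a, a ∈ l ↔ a ∈ s

/-- A coloring of a quiver: a map on arrows whose fibers are directed paths. -/
def IsColoring {S : Type} (c : A → S) : Prop :=
  ∀ s : S, IsDirPathSet src tgt {a | c a = s}

/-- The quiver has neither loops nor oriented cycles. -/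
def QuivAcyclic : Prop :=
  ∀ x : V, ¬ Relation.TransGen (fun x y => ∃ a, src a = x ∧ tgt a = y) x x

/-- `R` encodes a set of length-two relations: pairs `(a, b)` standing for the
path `ab` (first `b`, then `a`). -/
def ComposableRels (R : Set (A × A)) : Prop := ∀ p ∈ R, tgt p.2 = src p.1

/-- Condition (a) of a (gentle) string algebra: at most two arrows in and out of
each vertex. -/
def GentleA : Prop := ∀ x : V, Set.ncard {a | tgt a = x} ≤ 2 ∧ Set.ncard {a | src a = x} ≤ 2

/-- Condition (b): for each arrow `b`, at most one arrow `a` with `ta = hb`, `ab ∉ I`,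
and at most one arrow `c` with `hc = tb`, `bc ∉ I`. -/
def GentleB (R : Set (A × A)) : Prop :=
  ∀ b : A, {a | src a = tgt b ∧ (a, b) ∉ R}.Subsingleton ∧
    {c | tgt c = src b ∧ (b, c) ∉ R}.Subsingleton

/-- Condition (c): same as (b) but with `ab ∈ I`, `bc ∈ I`. -/
def GentleC (R : Set (A × A)) : Prop :=
  ∀ b : A, {a | src a = tgt b ∧ (a, b) ∈ R}.Subsingleton ∧
    {c | tgt c = src b ∧ (b, c) ∈ R}.Subsingleton

/-- The set of length-two relations of the ideal `I_c` generated by the monochromatic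
paths of length two, for a coloring `c`. -/
def monoRels {S : Type} (c : A → S) : Set (A × A) :=
  {p | tgt p.2 = src p.1 ∧ c p.2 = c p.1}

end Quiver

/-- if `kQ/I` is a gentle string algebra (conditions (a)-(c), with `I`
generated by the length-two paths recorded in `R`) and `Q` has neither loops nor
oriented cycles, then there is a coloring `c` of `Q` with `I_c = I`. -/
theorem gentle_is_colored {V A : Type} [Fintype V] [Fintype A] (src tgt : A → V)
    (R : Set (A × A)) (hacyc : QuivAcyclic src tgt) (hcomp : ComposableRels src tgt R)
    (ha : GentleA src tgt) (hb : GentleB src tgt R) (hc : GentleC src tgt R) :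
    ∃ (S : Type) (_ : Fintype S) (c : A → S),
      IsColoring src tgt c ∧ monoRels src tgt c = R := by
  classical
  have hacyc' : ∀ x : V, ¬ Relation.TransGen (GentleAux.QStep src tgt) x x := hacyc
  have hcomp' : ∀ p ∈ R, tgt p.2 = src p.1 := hcomp
  have hsu : ∀ {x y b : A}, (x, b) ∈ R → (y, b) ∈ R → x = y := fun {x y b} hx hy =>
    (hc b).1 ⟨(hcomp' _ hx).symm, hx⟩ ⟨(hcomp' _ hy).symm, hy⟩
  have hpu : ∀ {b x y : A}, (b, x) ∈ R → (b, y) ∈ R → x = y := fun {b x y} hx hy =>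
    (hc b).2 ⟨hcomp' _ hx, hx⟩ ⟨hcomp' _ hy, hy⟩
  have wf : WellFounded (GentleAux.F R) := GentleAux.wfF hcomp' hacyc'
  have wf' : WellFounded (Function.swap (GentleAux.F R)) :=
    GentleAux.wfFswap hcomp' hacyc'
  refine ⟨A, inferInstance, GentleAux.root wf, ?_, ?_⟩
  · intro s
    by_cases hs : ∃ b, (s, b) ∈ R
    · refine ⟨[], by simp, List.isChain_nil, fun a => ?_⟩
      simp only [List.not_mem_nil, Set.mem_setOf_eq, false_iff]
      intro h
      exact GentleAux.root_no_pred wf a (h ▸ hs)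
    · refine ⟨GentleAux.chain wf' s,
        GentleAux.chain_nodup hcomp' hsu wf' hacyc' s, ?_, fun a => ?_⟩
      · exact (GentleAux.chain_chain' wf' s).imp (fun p q hpq => hcomp' (q, p) hpq)
      · exact Iff.trans
          (GentleAux.root_eq_iff_mem_chain hsu hpu wf wf' hs).symm Iff.rfl
  · ext ⟨a, b⟩
    simp only [monoRels, Set.mem_setOf_eq]
    constructor
    · rintro ⟨hba, hroot⟩
      exact GentleAux.mono_to_R hcomp' hsu wf hacyc' hba hroot
    · intro h
      exact ⟨hcomp' _ h, (GentleAux.root_R hpu wf h).symm⟩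
end

section
/- Let Q be an acyclic quiver and kQ/I a string algebra. Then there exists a coloring c of Q and a surjective algebra homomorphism kQ/I_c → kQ/I, where kQ/I_c is a gentle string algebra. -/
namespace StringGentleAux

open Classical

variable {A : Type}

theorem wf_of_acyclic [Finite A] (r : A → A → Prop) (h : ∀ a, ¬ Relation.TransGen r a a) :
    WellFounded r := by
  have : IsTrans A (Relation.TransGen r) := inferInstance
  have : IsIrrefl A (Relation.TransGen r) := ⟨h⟩
  exact Subrelation.wf (fun {x y} hxy => Relation.TransGen.single hxy)
    (Finite.wellFounded_of_trans_of_irrefl _)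

noncomputable def chainRoot (r : A → A → Prop) (wf : WellFounded r) : A → A :=
  wf.fix fun a ih =>
    if h : ∃ b, r b a then ih (Classical.choose h) (Classical.choose_spec h) else a

theorem chainRoot_eq (r : A → A → Prop) (wf : WellFounded r) (a : A) :
    chainRoot r wf a =
      if h : ∃ b, r b a then chainRoot r wf (Classical.choose h) else a := by
  unfold chainRoot; exact wf.fix_eq _ a

variable {r : A → A → Prop}

theorem chainRoot_of_step (wf : WellFounded r)
    (hru : ∀ {b b' a : A}, r b a → r b' a → b = b') {b a : A} (h : r b a) :
    chainRoot r wf a = chainRoot r wf b := by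
  rw [chainRoot_eq, dif_pos ⟨b, h⟩]
  exact congrArg (chainRoot r wf)
    (hru (Classical.choose_spec (⟨b, h⟩ : ∃ b, r b a)) h)

theorem chainRoot_no_pred (wf : WellFounded r) (a : A) :
    ¬ ∃ b, r b (chainRoot r wf a) := by
  refine wf.induction (C := fun a => ¬ ∃ b, r b (chainRoot r wf a)) a ?_
  intro x ih hx
  by_cases h : ∃ b, r b x
  · rw [chainRoot_eq, dif_pos h] at hx
    exact ih _ (Classical.choose_spec h) hx
  · rw [chainRoot_eq, dif_neg h] at hx
    exact h hx

theorem chainRoot_reaches (wf : WellFounded r) (a : A) :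
    Relation.ReflTransGen r (chainRoot r wf a) a := by
  refine wf.induction (C := fun a => Relation.ReflTransGen r (chainRoot r wf a) a) a ?_
  intro x ih
  by_cases h : ∃ b, r b x
  · rw [chainRoot_eq, dif_pos h]
    exact (ih _ (Classical.choose_spec h)).tail (Classical.choose_spec h)
  · rw [chainRoot_eq, dif_neg h]

theorem chainRoot_fix (wf : WellFounded r) {s : A} (h : ¬ ∃ b, r b s) :
    chainRoot r wf s = s := by
  rw [chainRoot_eq, dif_neg h]

theorem chainRoot_of_reflTransGen (wf : WellFounded r)
    (hru : ∀ {b b' a : A}, r b a → r b' a → b = b') {s a : A}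
    (h : Relation.ReflTransGen r s a) : chainRoot r wf a = chainRoot r wf s := by
  induction h with
  | refl => rfl
  | tail _ hbc ih => exact (chainRoot_of_step wf hru hbc).trans ih

noncomputable def chainList (r : A → A → Prop) (wf : WellFounded (flip r)) : A → List A :=
  wf.fix fun a ih =>
    a :: (if h : ∃ b, r a b then ih (Classical.choose h) (Classical.choose_spec h) else [])

theorem chainList_eq (r : A → A → Prop) (wf : WellFounded (flip r)) (a : A) :
    chainList r wf a =
      a :: (if h : ∃ b, r a b then chainList r wf (Classical.choose h) else []) := by
  unfold chainList; exact wf.fix_eq _ a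

theorem head?_chainList (wf : WellFounded (flip r)) (a : A) :
    (chainList r wf a).head? = some a := by
  rw [chainList_eq]; rfl

theorem mem_chainList (wf : WellFounded (flip r))
    (hru : ∀ {a b b' : A}, r a b → r a b' → b = b') (a x : A) :
    x ∈ chainList r wf a ↔ Relation.ReflTransGen r a x := by
  refine wf.induction (C := fun a => x ∈ chainList r wf a ↔ Relation.ReflTransGen r a x) a ?_
  intro a ih
  have ih' : ∀ y, flip r y a → (x ∈ chainList r wf y ↔ Relation.ReflTransGen r y x) := ih
  rw [chainList_eq]
  by_cases h : ∃ b, r a b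
  · rw [dif_pos h, List.mem_cons, ih' _ (Classical.choose_spec h)]
    constructor
    · rintro (rfl | hx)
      · exact .refl
      · exact Relation.ReflTransGen.head (Classical.choose_spec h) hx
    · intro hx
      rcases Relation.ReflTransGen.cases_head hx with rfl | ⟨c, hac, hcx⟩
      · exact Or.inl rfl
      · exact Or.inr (by rw [hru (Classical.choose_spec h) hac]; exact hcx)
  · rw [dif_neg h]
    simp only [List.mem_cons, List.not_mem_nil, or_false]
    constructor
    · rintro rfl; exact .refl
    · intro hx
      rcases Relation.ReflTransGen.cases_head hx with rfl | ⟨c, hac, _⟩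
      · rfl
      · exact absurd ⟨c, hac⟩ h

theorem nodup_chainList (wf : WellFounded (flip r))
    (hirr : ∀ a, ¬ Relation.TransGen r a a)
    (hru : ∀ {a b b' : A}, r a b → r a b' → b = b') (a : A) :
    (chainList r wf a).Nodup := by
  refine wf.induction (C := fun a => (chainList r wf a).Nodup) a ?_
  intro a ih
  rw [chainList_eq]
  by_cases h : ∃ b, r a b
  · rw [dif_pos h]
    refine List.nodup_cons.mpr ⟨?_, ih _ (Classical.choose_spec h)⟩
    intro hmem
    have hrt := (mem_chainList wf hru (Classical.choose h) a).mp hmem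
    exact hirr a (Relation.TransGen.head' (Classical.choose_spec h) hrt)
  · rw [dif_neg h]
    exact List.nodup_cons.mpr ⟨List.not_mem_nil (a := a), List.nodup_nil⟩

theorem chain'_chainList (wf : WellFounded (flip r)) {p : A → A → Prop}
    (hp : ∀ {x y : A}, r x y → p x y) (a : A) :
    (chainList r wf a).Chain' p := by
  refine wf.induction (C := fun a => (chainList r wf a).Chain' p) a ?_
  intro a ih
  rw [chainList_eq]
  by_cases h : ∃ b, r a b
  · rw [dif_pos h, List.Chain', List.isChain_cons]
    refine ⟨?_, ih _ (Classical.choose_spec h)⟩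
    intro y hy
    rw [head?_chainList, Option.mem_def, Option.some.injEq] at hy
    rw [← hy]
    exact hp (Classical.choose_spec h)
  · rw [dif_neg h]
    exact List.isChain_singleton a

theorem three_le {s : Set A} (hfin : s.Finite) (h2 : s.ncard ≤ 2) {x y z : A}
    (hx : x ∈ s) (hy : y ∈ s) (hz : z ∈ s) : x = y ∨ x = z ∨ y = z := by
  by_contra hc
  push_neg at hc
  obtain ⟨hxy, hxz, hyz⟩ := hc
  have hsub : ({x, y, z} : Set A) ⊆ s := by
    intro w hw
    simp only [Set.mem_insert_iff, Set.mem_singleton_iff] at hw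
    rcases hw with rfl | rfl | rfl <;> assumption
  have h3 : ({x, y, z} : Set A).ncard = 3 := by
    rw [Set.ncard_insert_of_notMem (by simp [hxy, hxz])
        ((Set.finite_singleton z).insert y),
      Set.ncard_insert_of_notMem (by simp [hyz]) (Set.finite_singleton z),
      Set.ncard_singleton]
  have := Set.ncard_le_ncard hsub hfin
  omega



theorem local_matching {A : Type} (I O : Set A) (E : A → A → Prop)
    (hI2 : ∀ x ∈ I, ∀ y ∈ I, ∀ z ∈ I, x = y ∨ x = z ∨ y = z)
    (hO2 : ∀ x ∈ O, ∀ y ∈ O, ∀ z ∈ O, x = y ∨ x = z ∨ y = z)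
    (hrow : ∀ b ∈ I, {a | a ∈ O ∧ ¬ E b a}.Subsingleton)
    (hcol : ∀ a ∈ O, {b | b ∈ I ∧ ¬ E b a}.Subsingleton) :
    ∃ m : Set (A × A),
      (∀ p ∈ m, p.1 ∈ I ∧ p.2 ∈ O ∧ E p.1 p.2) ∧
      (∀ p ∈ m, ∀ q ∈ m, p.1 = q.1 → p = q) ∧
      (∀ p ∈ m, ∀ q ∈ m, p.2 = q.2 → p = q) ∧
      ((∃ a1 ∈ O, ∃ a2 ∈ O, a1 ≠ a2) → ∀ b ∈ I, ∃ a, (b, a) ∈ m) ∧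
      ((∃ b1 ∈ I, ∃ b2 ∈ I, b1 ≠ b2) → ∀ a ∈ O, ∃ b, (b, a) ∈ m) := by
  by_cases hO : ∃ a1 ∈ O, ∃ a2 ∈ O, a1 ≠ a2
  · by_cases hI : ∃ b1 ∈ I, ∃ b2 ∈ I, b1 ≠ b2
    · -- two in, two out
      obtain ⟨a1, ha1, a2, ha2, hane⟩ := hO
      obtain ⟨b1, hb1, b2, hb2, hbne⟩ := hI
      have hOall : ∀ a ∈ O, a = a1 ∨ a = a2 := by
        intro a haO
        rcases hO2 a haO a1 ha1 a2 ha2 with h | h | h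
        exacts [Or.inl h, Or.inr h, absurd h hane]
      have hIall : ∀ b ∈ I, b = b1 ∨ b = b2 := by
        intro b hbI
        rcases hI2 b hbI b1 hb1 b2 hb2 with h | h | h
        exacts [Or.inl h, Or.inr h, absurd h hbne]
      have hrow' : ∀ b ∈ I, ∀ aa ∈ O, ∀ ab ∈ O, aa ≠ ab → ¬ E b aa → E b ab := by
        intro b hbI aa haa ab hab hne hEa
        by_contra hEb
        exact hne (hrow b hbI ⟨haa, hEa⟩ ⟨hab, hEb⟩)
      have hcol' : ∀ a ∈ O, ∀ ba ∈ I, ∀ bb ∈ I, ba ≠ bb → ¬ E ba a → E bb a := by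
        intro a haO ba hba bb hbb hne hEa
        by_contra hEb
        exact hne (hcol a haO ⟨hba, hEa⟩ ⟨hbb, hEb⟩)
      by_cases hd : E b1 a1 ∧ E b2 a2
      · refine ⟨{(b1, a1), (b2, a2)}, ?_, ?_, ?_, ?_, ?_⟩
        · intro p hp
          simp only [Set.mem_insert_iff, Set.mem_singleton_iff] at hp
          rcases hp with rfl | rfl
          exacts [⟨hb1, ha1, hd.1⟩, ⟨hb2, ha2, hd.2⟩]
        · intro p hp q hq h1
          simp only [Set.mem_insert_iff, Set.mem_singleton_iff] at hp hq
          rcases hp with rfl | rfl <;> rcases hq with rfl | rfl <;> simp_all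
        · intro p hp q hq h1
          simp only [Set.mem_insert_iff, Set.mem_singleton_iff] at hp hq
          rcases hp with rfl | rfl <;> rcases hq with rfl | rfl <;> simp_all
        · intro _ b hbI
          rcases hIall b hbI with rfl | rfl
          exacts [⟨a1, by simp⟩, ⟨a2, by simp⟩]
        · intro _ a haO
          rcases hOall a haO with rfl | rfl
          exacts [⟨b1, by simp⟩, ⟨b2, by simp⟩]
      · have hcross : E b1 a2 ∧ E b2 a1 := by
          rcases not_and_or.mp hd with h | h
          · exact ⟨hrow' b1 hb1 a1 ha1 a2 ha2 hane h, hcol' a1 ha1 b1 hb1 b2 hb2 hbne h⟩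
          · exact ⟨hcol' a2 ha2 b2 hb2 b1 hb1 hbne.symm h, hrow' b2 hb2 a2 ha2 a1 ha1 hane.symm h⟩
        refine ⟨{(b1, a2), (b2, a1)}, ?_, ?_, ?_, ?_, ?_⟩
        · intro p hp
          simp only [Set.mem_insert_iff, Set.mem_singleton_iff] at hp
          rcases hp with rfl | rfl
          exacts [⟨hb1, ha2, hcross.1⟩, ⟨hb2, ha1, hcross.2⟩]
        · intro p hp q hq h1
          simp only [Set.mem_insert_iff, Set.mem_singleton_iff] at hp hq
          rcases hp with rfl | rfl <;> rcases hq with rfl | rfl <;> simp_all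
        · intro p hp q hq h1
          simp only [Set.mem_insert_iff, Set.mem_singleton_iff] at hp hq
          rcases hp with rfl | rfl <;> rcases hq with rfl | rfl <;> simp_all
        · intro _ b hbI
          rcases hIall b hbI with rfl | rfl
          exacts [⟨a2, by simp⟩, ⟨a1, by simp⟩]
        · intro _ a haO
          rcases hOall a haO with rfl | rfl
          exacts [⟨b2, by simp⟩, ⟨b1, by simp⟩]
    · -- at most one in
      by_cases hIe : ∃ b, b ∈ I
      · obtain ⟨b, hbI⟩ := hIe
        obtain ⟨a1, ha1, a2, ha2, hane⟩ := hO
        have hE : ∃ a ∈ O, E b a := by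
          by_contra h
          push_neg at h
          exact hane (hrow b hbI ⟨ha1, h a1 ha1⟩ ⟨ha2, h a2 ha2⟩)
        obtain ⟨a, haO, hEa⟩ := hE
        refine ⟨{(b, a)}, ?_, ?_, ?_, ?_, ?_⟩
        · intro p hp
          rw [Set.mem_singleton_iff] at hp
          subst hp
          exact ⟨hbI, haO, hEa⟩
        · intro p hp q hq _
          rw [Set.mem_singleton_iff] at hp hq
          rw [hp, hq]
        · intro p hp q hq _
          rw [Set.mem_singleton_iff] at hp hq
          rw [hp, hq]
        · intro _ b' hb'
          by_cases hbb : b' = b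
          · subst hbb; exact ⟨a, rfl⟩
          · exact absurd ⟨b', hb', b, hbI, hbb⟩ hI
        · intro h2
          exact absurd h2 hI
      · refine ⟨∅, ?_, ?_, ?_, ?_, ?_⟩
        · intro p hp; exact absurd hp (Set.notMem_empty p)
        · intro p hp; exact absurd hp (Set.notMem_empty p)
        · intro p hp; exact absurd hp (Set.notMem_empty p)
        · intro _ b hbI; exact absurd ⟨b, hbI⟩ hIe
        · intro ⟨b1, h1, _⟩; exact absurd ⟨b1, h1⟩ hIe
  · by_cases hI : ∃ b1 ∈ I, ∃ b2 ∈ I, b1 ≠ b2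
    · -- at most one out, two in
      by_cases hOe : ∃ a, a ∈ O
      · obtain ⟨a, haO⟩ := hOe
        obtain ⟨b1, hb1, b2, hb2, hbne⟩ := hI
        have hE : ∃ b ∈ I, E b a := by
          by_contra h
          push_neg at h
          exact hbne (hcol a haO ⟨hb1, h b1 hb1⟩ ⟨hb2, h b2 hb2⟩)
        obtain ⟨b, hbI, hEb⟩ := hE
        refine ⟨{(b, a)}, ?_, ?_, ?_, ?_, ?_⟩
        · intro p hp
          rw [Set.mem_singleton_iff] at hp
          subst hp
          exact ⟨hbI, haO, hEb⟩
        · intro p hp q hq _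
          rw [Set.mem_singleton_iff] at hp hq
          rw [hp, hq]
        · intro p hp q hq _
          rw [Set.mem_singleton_iff] at hp hq
          rw [hp, hq]
        · intro h2
          exact absurd h2 hO
        · intro _ a' ha'
          by_cases haa : a' = a
          · subst haa; exact ⟨b, rfl⟩
          · exact absurd ⟨a', ha', a, haO, haa⟩ hO
      · refine ⟨∅, ?_, ?_, ?_, ?_, ?_⟩
        · intro p hp; exact absurd hp (Set.notMem_empty p)
        · intro p hp; exact absurd hp (Set.notMem_empty p)
        · intro p hp; exact absurd hp (Set.notMem_empty p)
        · intro ⟨a1, h1, _⟩; exact absurd ⟨a1, h1⟩ hOe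
        · intro _ a haO; exact absurd ⟨a, haO⟩ hOe
    · refine ⟨∅, ?_, ?_, ?_, ?_, ?_⟩
      · intro p hp; exact absurd hp (Set.notMem_empty p)
      · intro p hp; exact absurd hp (Set.notMem_empty p)
      · intro p hp; exact absurd hp (Set.notMem_empty p)
      · intro h2; exact absurd h2 hO
      · intro h2; exact absurd h2 hI


end StringGentleAux

/-- if `Q` is acyclic and `kQ/I` is a string algebra (conditions (a),(b),
with `I` generated by the length-two paths recorded in `R`), then there is a coloring
`c` of `Q` such that `kQ/I_c` is a gentle string algebra and such that `I_c ⊆ I`, i.e.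
the identity on arrows induces a surjective algebra homomorphism `kQ/I_c → kQ/I`. -/
theorem string_algebra_quotient_of_gentle {V A : Type} [Fintype V] [Fintype A]
    (src tgt : A → V) (R : Set (A × A)) (hacyc : QuivAcyclic src tgt)
    (hcomp : ComposableRels src tgt R) (ha : GentleA src tgt) (hb : GentleB src tgt R) :
    ∃ (S : Type) (_ : Fintype S) (c : A → S),
      IsColoring src tgt c ∧
      GentleB src tgt (monoRels src tgt c) ∧
      GentleC src tgt (monoRels src tgt c) ∧
      monoRels src tgt c ⊆ R := by
  classical
  open StringGentleAux in
  -- per-vertex matchings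
  have hI2 : ∀ x : V, ∀ b ∈ {b : A | tgt b = x}, ∀ b' ∈ {b : A | tgt b = x},
      ∀ b'' ∈ {b : A | tgt b = x}, b = b' ∨ b = b'' ∨ b' = b'' := by
    intro x b hbx b' hb'x b'' hb''x
    exact three_le (Set.toFinite _) (ha x).1 hbx hb'x hb''x
  have hO2 : ∀ x : V, ∀ a ∈ {a : A | src a = x}, ∀ a' ∈ {a : A | src a = x},
      ∀ a'' ∈ {a : A | src a = x}, a = a' ∨ a = a'' ∨ a' = a'' := by
    intro x a hax a' ha'x a'' ha''x
    exact three_le (Set.toFinite _) (ha x).2 hax ha'x ha''x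
  have hrow : ∀ x : V, ∀ b ∈ {b : A | tgt b = x},
      {a | a ∈ {a : A | src a = x} ∧ ¬ (fun b a => (a, b) ∈ R) b a}.Subsingleton := by
    intro x b hbx u hu v hv
    have hbx' : tgt b = x := hbx
    exact (hb b).1 ⟨hu.1.trans hbx'.symm, hu.2⟩ ⟨hv.1.trans hbx'.symm, hv.2⟩
  have hcol : ∀ x : V, ∀ a ∈ {a : A | src a = x},
      {b | b ∈ {b : A | tgt b = x} ∧ ¬ (fun b a => (a, b) ∈ R) b a}.Subsingleton := by
    intro x a hax u hu v hv
    have hax' : src a = x := hax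
    exact (hb a).2 ⟨hu.1.trans hax'.symm, hu.2⟩ ⟨hv.1.trans hax'.symm, hv.2⟩
  choose m hm using fun x : V =>
    local_matching {b : A | tgt b = x} {a : A | src a = x} (fun b a => (a, b) ∈ R)
      (hI2 x) (hO2 x) (hrow x) (hcol x)
  set r : A → A → Prop := fun b a => ∃ x, (b, a) ∈ m x with hr
  have hmem : ∀ {b a : A}, r b a → tgt b = src a ∧ (a, b) ∈ R := by
    rintro b a ⟨x, hx⟩
    obtain ⟨h1, h2, h3⟩ := (hm x).1 _ hx
    have h1' : tgt b = x := h1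
    have h2' : src a = x := h2
    exact ⟨h1'.trans h2'.symm, h3⟩
  have hfun : ∀ {b a a' : A}, r b a → r b a' → a = a' := by
    rintro b a a' ⟨x, hx⟩ ⟨x', hx'⟩
    have e1 : tgt b = x := ((hm x).1 _ hx).1
    have e2 : tgt b = x' := ((hm x').1 _ hx').1
    rw [e1] at e2
    subst e2
    have := (hm x).2.1 _ hx _ hx' rfl
    exact congrArg Prod.snd this
  have hinj : ∀ {b b' a : A}, r b a → r b' a → b = b' := by
    rintro b b' a ⟨x, hx⟩ ⟨x', hx'⟩
    have e1 : src a = x := ((hm x).1 _ hx).2.1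
    have e2 : src a = x' := ((hm x').1 _ hx').2.1
    rw [e1] at e2
    subst e2
    have := (hm x).2.2.1 _ hx _ hx' rfl
    exact congrArg Prod.fst this
  have hcov_out : ∀ b a1 a2 : A, src a1 = tgt b → src a2 = tgt b → a1 ≠ a2 →
      ∃ a, r b a := by
    intro b a1 a2 h1 h2 hne
    obtain ⟨a, haM⟩ := (hm (tgt b)).2.2.2.1 ⟨a1, h1, a2, h2, hne⟩ b rfl
    exact ⟨a, tgt b, haM⟩
  have hcov_in : ∀ a b1 b2 : A, tgt b1 = src a → tgt b2 = src a → b1 ≠ b2 →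
      ∃ b, r b a := by
    intro a b1 b2 h1 h2 hne
    obtain ⟨b, hbM⟩ := (hm (src a)).2.2.2.2 ⟨b1, h1, b2, h2, hne⟩ a rfl
    exact ⟨b, src a, hbM⟩
  have hlift : ∀ {b a : A}, r b a →
      (∃ e, src e = src b ∧ tgt e = src a) := fun h => ⟨_, rfl, (hmem h).1⟩
  have hirr : ∀ a, ¬ Relation.TransGen r a a := by
    intro a h
    exact hacyc (src a) (Relation.TransGen.lift (p := fun x y => ∃ e, src e = x ∧ tgt e = y) src (fun x y hxy => hlift hxy) _ _ h)
  have wfb : WellFounded r := wf_of_acyclic r hirr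
  have hirr' : ∀ a, ¬ Relation.TransGen (flip r) a a := by
    intro a h
    exact hirr a (Relation.transGen_swap.mp h)
  have wff : WellFounded (flip r) := wf_of_acyclic _ hirr'
  have monoKey : ∀ p : A × A,
      p ∈ monoRels src tgt (chainRoot r wfb) ↔ r p.2 p.1 := by
    rintro ⟨a, b⟩
    constructor
    · rintro ⟨hco, hcc⟩
      have hco' : tgt b = src a := hco
      have hcc' : chainRoot r wfb b = chainRoot r wfb a := hcc
      have h1 : Relation.ReflTransGen r (chainRoot r wfb b) b := chainRoot_reaches wfb b
      have h2 : Relation.ReflTransGen r (chainRoot r wfb b) a := by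
        rw [hcc']; exact chainRoot_reaches wfb a
      have hRU : Relator.RightUnique r := fun _ _ _ h h' => hfun h h'
      rcases Relation.ReflTransGen.total_of_right_unique hRU h1 h2 with hba | hab
      · rcases Relation.ReflTransGen.cases_head hba with heq | ⟨a', ha', hrest⟩
        · exfalso
          exact hacyc (src b)
            (Relation.TransGen.single ⟨b, rfl, hco'.trans (congrArg src heq.symm)⟩)
        · by_cases he : a' = a
          · exact he ▸ ha'
          · exfalso
            have ht : Relation.TransGen r a' a :=
              (Relation.reflTransGen_iff_eq_or_transGen.mp hrest).resolve_left
                (fun h => he h.symm)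
            have hstep := Relation.TransGen.lift (p := fun x y => ∃ e, src e = x ∧ tgt e = y) src (fun x y hxy => hlift hxy) _ _ ht
            have e : src a' = src a := (hmem ha').1.symm.trans hco'
            rw [Function.onFun, e] at hstep
            exact hacyc (src a) hstep
      · exfalso
        rcases Relation.reflTransGen_iff_eq_or_transGen.mp hab with heq | ht
        · exact hacyc (src b)
            (Relation.TransGen.single ⟨b, rfl, hco'.trans (congrArg src heq).symm⟩)
        · have hstep := Relation.TransGen.lift (p := fun x y => ∃ e, src e = x ∧ tgt e = y) src (fun x y hxy => hlift hxy) _ _ ht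
          exact hacyc (src a) (hstep.tail ⟨b, rfl, hco'⟩)
    · intro hrr
      exact ⟨(hmem hrr).1,
        (chainRoot_of_step wfb (fun h h' => hinj h h') hrr).symm⟩
  refine ⟨A, inferInstance, chainRoot r wfb, ?_, ?_, ?_, ?_⟩
  · -- IsColoring
    intro s
    by_cases hs : ∃ b, r b s
    · refine ⟨[], List.nodup_nil, List.isChain_nil, ?_⟩
      intro a
      constructor
      · intro h; exact absurd h (List.not_mem_nil (a := a))
      · intro h
        have h' : chainRoot r wfb a = s := h
        exact absurd (by rw [h']; exact hs) (chainRoot_no_pred wfb a)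
    · refine ⟨chainList r wff s,
        nodup_chainList wff hirr (fun h h' => hfun h h') s,
        chain'_chainList wff (fun hxy => (hmem hxy).1) s, ?_⟩
      intro a
      rw [mem_chainList wff (fun h h' => hfun h h') s a]
      constructor
      · intro h
        show chainRoot r wfb a = s
        exact (chainRoot_of_reflTransGen wfb (fun h h' => hinj h h') h).trans
          (chainRoot_fix wfb hs)
      · intro h
        have h' : chainRoot r wfb a = s := h
        rw [← h']
        exact chainRoot_reaches wfb a
  · -- GentleB for monoRels
    intro b
    constructor
    · intro a1 h1 a2 h2
      by_contra hne
      obtain ⟨a, haM⟩ := hcov_out b a1 a2 h1.1 h2.1 hne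
      have hsrc : src a = tgt b := (hmem haM).1.symm
      rcases three_le (Set.toFinite _) (ha (tgt b)).2
          (show a ∈ {e : A | src e = tgt b} from hsrc) h1.1 h2.1 with h | h | h
      · exact h1.2 ((monoKey (a1, b)).mpr (h ▸ haM))
      · exact h2.2 ((monoKey (a2, b)).mpr (h ▸ haM))
      · exact hne h
    · intro c1 h1 c2 h2
      by_contra hne
      obtain ⟨b', hbM⟩ := hcov_in b c1 c2 h1.1 h2.1 hne
      have htgt : tgt b' = src b := (hmem hbM).1
      rcases three_le (Set.toFinite _) (ha (src b)).1
          (show b' ∈ {e : A | tgt e = src b} from htgt) h1.1 h2.1 with h | h | h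
      · exact h1.2 ((monoKey (b, c1)).mpr (h ▸ hbM))
      · exact h2.2 ((monoKey (b, c2)).mpr (h ▸ hbM))
      · exact hne h
  · -- GentleC for monoRels
    intro b
    constructor
    · intro a1 h1 a2 h2
      exact hfun ((monoKey (a1, b)).mp h1.2) ((monoKey (a2, b)).mp h2.2)
    · intro c1 h1 c2 h2
      exact hinj ((monoKey (b, c1)).mp h1.2) ((monoKey (b, c2)).mp h2.2)
  · -- monoRels ⊆ R
    rintro ⟨a, b⟩ hp
    exact (hmem ((monoKey (a, b)).mp hp)).2
end

section
/- For a rank sequence r for β, the set Com°(β, r) of tuples (A_i) in Com_{n+1}(β) with rank A_i = r_i for all i ∈ [n] is a single orbit under the action of GL(β) = ∏ GL(β_i) by simultaneous change of basis. -/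
open Module Submodule

/-- A rank sequence for the dimension vector `β` of the equioriented `A` quiver
`0 → 1 → 2 → ⋯`: `r i` is the rank bound on the arrow `i → i+1`, and adjacent
ranks fit into the dimension at each vertex. -/
def IsRankSeq (β r : ℕ → ℕ) : Prop :=
  r 0 ≤ β 0 ∧ ∀ i, r i + r (i + 1) ≤ β (i + 1)

lemma ext1 {k V : Type} [Field k] [AddCommGroup V] [Module k V]
    [FiniteDimensional k V] {m a : ℕ} (hm : Module.finrank k V = m)
    (v : Fin a → V) (hv : LinearIndependent k v) :
    ∃ u : Basis (Fin m) k V, ∀ (j : Fin a) (h : (j : ℕ) < m), u ⟨j, h⟩ = v j := by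
  classical
  set W := span k (Set.range v) with hW
  let b1 : Basis (Fin a) k W := Basis.span hv
  obtain ⟨C, hC⟩ := Submodule.exists_isCompl W
  have hWa : finrank k W = a := by
    rw [hW, finrank_span_eq_card hv, Fintype.card_fin]
  have ham : a ≤ m := by
    rw [← hWa, ← hm]; exact Submodule.finrank_le W
  have hCrank : finrank k C = m - a := by
    have := Submodule.finrank_add_eq_of_isCompl hC
    omega
  let bC : Basis (Fin (m - a)) k C := finBasisOfFinrankEq k C hCrank
  let bV : Basis (Fin a ⊕ Fin (m - a)) k V :=
    (b1.prod bC).map (Submodule.prodEquivOfIsCompl W C hC)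
  have hadd : a + (m - a) = m := by omega
  refine ⟨bV.reindex ((finSumFinEquiv).trans (finCongr hadd)), fun j h => ?_⟩
  have : ((finSumFinEquiv.trans (finCongr hadd)).symm ⟨(j : ℕ), h⟩ : Fin a ⊕ Fin (m - a))
      = Sum.inl j := by
    apply (finSumFinEquiv.trans (finCongr hadd)).injective
    simp [Equiv.apply_symm_apply]
    ext
    simp [finSumFinEquiv]
  rw [Basis.reindex_apply, this]
  show (Submodule.prodEquivOfIsCompl W C hC) ((b1.prod bC) (Sum.inl j)) = v j
  rw [Basis.prod_apply]
  simp [Submodule.coe_prodEquivOfIsCompl', Basis.span_apply]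
  exact congrArg Subtype.val (Module.Basis.span_apply hv j)

lemma extAdapted {k V : Type} [Field k] [AddCommGroup V] [Module k V]
    [FiniteDimensional k V] {m a d : ℕ} (hm : Module.finrank k V = m)
    (W : Submodule k V) (hd : Module.finrank k W = d)
    (v : Fin a → V) (hv : LinearIndependent k v) (hvW : ∀ j, v j ∈ W) :
    ∃ u : Basis (Fin m) k V,
      (∀ (j : Fin a) (h : (j : ℕ) < m), u ⟨j, h⟩ = v j) ∧
      (∀ l : Fin m, (l : ℕ) < d → u l ∈ W) := by
  classical
  set v' : Fin a → W := fun j => ⟨v j, hvW j⟩ with hv'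
  have hv'i : LinearIndependent k v' := by
    have : v = (W.subtype) ∘ v' := by funext j; rfl
    rw [this] at hv
    exact LinearIndependent.of_comp _ hv
  obtain ⟨u', hu'⟩ := ext1 hd v' hv'i
  have had : a ≤ d := by
    simpa [hd] using hv'i.fintype_card_le_finrank
  set w : Fin d → V := fun l => (u' l : V) with hw
  have hwi : LinearIndependent k w :=
    u'.linearIndependent.map' W.subtype (Submodule.ker_subtype W)
  obtain ⟨u, hu⟩ := ext1 hm w hwi
  have hdm : d ≤ m := by
    simpa [hm] using hwi.fintype_card_le_finrank
  refine ⟨u, fun j h => ?_, fun l hl => ?_⟩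
  · have h1 : ((j : ℕ)) < d := lt_of_lt_of_le j.2 had
    have := hu ⟨(j : ℕ), h1⟩ h
    rw [this, hw]
    show ((u' ⟨(j:ℕ), h1⟩ : W) : V) = v j
    rw [hu' j h1]
  · have : u l = w ⟨(l : ℕ), hl⟩ := by
      have := hu ⟨(l : ℕ), hl⟩ l.2
      simpa using this
    rw [this, hw]
    exact (u' ⟨(l : ℕ), hl⟩).2

section Aux
variable {k : Type} [Field k]

lemma ker_dim {m p : ℕ} (M : Matrix (Fin p) (Fin m) k) :
    finrank k (LinearMap.ker M.mulVecLin) = m - M.rank := by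
  have h := LinearMap.finrank_range_add_finrank_ker M.mulVecLin
  rw [Module.finrank_fin_fun] at h
  have : M.rank = finrank k (LinearMap.range M.mulVecLin) := rfl
  omega

/-- The key single-column-space construction: a `g ∈ GL_m(k)` whose inverse has
prescribed first `a` columns `v` (which must be independent and in `ker M`), and such
that the first `m - rank M` columns of `M * g⁻¹` vanish. -/
lemma exists_good {m p a : ℕ} (M : Matrix (Fin p) (Fin m) k)
    (v : Fin a → (Fin m → k)) (hvind : LinearIndependent k v)
    (hvker : ∀ t, M.mulVec (v t) = 0) :
    ∃ g : Matrix.GeneralLinearGroup (Fin m) k,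
      (∀ (j : Fin a) (h : (j : ℕ) < m), (fun x => ((g⁻¹).val) x ⟨(j : ℕ), h⟩) = v j) ∧
      (∀ q : Fin m, (q : ℕ) < m - M.rank → ∀ x, (M * (g⁻¹).val) x q = 0) := by
  classical
  set W := LinearMap.ker M.mulVecLin with hW
  have hd : finrank k W = m - M.rank := ker_dim M
  have hvW : ∀ j, v j ∈ W := by
    intro j; rw [hW, LinearMap.mem_ker, Matrix.mulVecLin_apply]; exact hvker j
  obtain ⟨u, hu1, hu2⟩ := extAdapted (Module.finrank_fin_fun k) W hd v hvind hvW
  set hmat : Matrix (Fin m) (Fin m) k := (Pi.basisFun k (Fin m)).toMatrix u with hhmat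
  have hinv : Invertible hmat := (Pi.basisFun k (Fin m)).invertibleToMatrix u
  refine ⟨(unitOfInvertible hmat)⁻¹, ?_, ?_⟩
  · intro j h
    have : (((unitOfInvertible hmat)⁻¹)⁻¹ : Matrix.GeneralLinearGroup (Fin m) k).val = hmat := by
      rw [inv_inv]; rfl
    rw [this, ← hu1 j h]
    funext x
    simp [hhmat, Basis.toMatrix_apply, Pi.basisFun_repr]
  · intro q hq x
    have : (((unitOfInvertible hmat)⁻¹)⁻¹ : Matrix.GeneralLinearGroup (Fin m) k).val = hmat := by
      rw [inv_inv]; rfl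
    rw [this]
    have hker : u q ∈ W := hu2 q (by omega)
    have : M.mulVec (u q) = 0 := by
      rw [hW, LinearMap.mem_ker, Matrix.mulVecLin_apply] at hker; exact hker
    calc (M * hmat) x q = M.mulVec (u q) x := by
          simp [Matrix.mul_apply, Matrix.mulVec, dotProduct, hhmat,
            Basis.toMatrix_apply, Pi.basisFun_repr]
      _ = 0 := by rw [this]; rfl

end Aux

section Aux2
variable {k : Type} [Field k]

lemma ker_eq_span {m p : ℕ} (M : Matrix (Fin p) (Fin m) k)
    (hcol : ∀ q : Fin m, (q : ℕ) < m - M.rank → ∀ x, M x q = 0) :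
    LinearMap.ker M.mulVecLin
      = span k ((Pi.basisFun k (Fin m)) '' {q : Fin m | (q : ℕ) < m - M.rank}) := by
  classical
  have hs : m - M.rank ≤ m := Nat.sub_le _ _
  have himg : (⇑(Pi.basisFun k (Fin m))) '' {q : Fin m | (q : ℕ) < m - M.rank}
      = Set.range (⇑(Pi.basisFun k (Fin m)) ∘ Fin.castLE hs) := by
    rw [Set.range_comp, Fin.range_castLE]
  have hle : span k ((Pi.basisFun k (Fin m)) '' {q : Fin m | (q : ℕ) < m - M.rank})
      ≤ LinearMap.ker M.mulVecLin := by
    rw [span_le]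
    rintro _ ⟨q, hq, rfl⟩
    rw [SetLike.mem_coe, LinearMap.mem_ker, Matrix.mulVecLin_apply, Pi.basisFun_apply,
      Matrix.mulVec_single]
    funext x
    simp [hcol q hq x]
  have hcard : finrank k (span k ((Pi.basisFun k (Fin m)) '' {q : Fin m | (q : ℕ) < m - M.rank}))
      = m - M.rank := by
    rw [himg, finrank_span_eq_card
      ((Pi.basisFun k (Fin m)).linearIndependent.comp _ (Fin.castLE_injective hs)),
      Fintype.card_fin]
  exact (Submodule.eq_of_le_of_finrank_le hle (by rw [ker_dim, hcard])).symm

lemma cols_indep {m p r : ℕ} (M : Matrix (Fin p) (Fin m) k) (hrank : M.rank = r)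
    (hr : r ≤ m) (hcol : ∀ q : Fin m, (q : ℕ) < m - r → ∀ x, M x q = 0) :
    LinearIndependent k
      (fun t : Fin r => M.mulVec (Pi.single (⟨m - r + (t : ℕ), by omega⟩ : Fin m) 1)) := by
  classical
  set f : Fin r → Fin m := fun t => ⟨m - r + (t : ℕ), by omega⟩ with hf
  have finj : Function.Injective f := by
    intro a b hab
    have := congrArg (fun x : Fin m => (x : ℕ)) hab
    simp only [hf] at this
    exact Fin.ext (by omega)
  have hbi : LinearIndependent k (⇑(Pi.basisFun k (Fin m)) ∘ f) :=
    (Pi.basisFun k (Fin m)).linearIndependent.comp f finj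
  have hdisj : Disjoint (span k (Set.range (⇑(Pi.basisFun k (Fin m)) ∘ f)))
      (LinearMap.ker M.mulVecLin) := by
    rw [ker_eq_span M (by rw [hrank]; exact hcol), Set.range_comp]
    refine (Pi.basisFun k (Fin m)).linearIndependent.disjoint_span_image ?_
    rw [Set.disjoint_left]
    rintro _ ⟨t, rfl⟩ hmem
    simp only [hf, Set.mem_setOf_eq] at hmem
    omega
  have := hbi.map (f := M.mulVecLin) hdisj
  convert this using 1
  funext t
  simp [hf, Matrix.mulVecLin_apply, Pi.basisFun_apply]
  all_goals rfl

end Aux2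

def NMat (k : Type) [Field k] (β r : ℕ → ℕ) (i : ℕ) :
    Matrix (Fin (β (i + 1))) (Fin (β i)) k :=
  Matrix.of fun p q => if (q : ℕ) = (p : ℕ) + (β i - r i) then 1 else 0

lemma normalizeComplex {k : Type} [Field k] (β r : ℕ → ℕ) (hr : IsRankSeq β r)
    (A : ∀ i : ℕ, Matrix (Fin (β (i + 1))) (Fin (β i)) k)
    (hA : ∀ i, A (i + 1) * A i = 0) (hrA : ∀ i, (A i).rank = r i) :
    ∃ g : ∀ i : ℕ, Matrix.GeneralLinearGroup (Fin (β i)) k,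
      ∀ i, (g (i + 1)).val * A i * ((g i)⁻¹).val = NMat k β r i := by
  classical
  have hrβ : ∀ i, r i ≤ β i := by
    intro i; cases i with
    | zero => exact hr.1
    | succ j => have := hr.2 j; omega
  have hrβ' : ∀ i, r i ≤ β (i + 1) := fun i => by have := hr.2 i; omega
  let Good : ∀ i, Matrix.GeneralLinearGroup (Fin (β i)) k → Prop := fun i g =>
    ∀ q : Fin (β i), (q : ℕ) < β i - r i → ∀ x, (A i * (g⁻¹).val) x q = 0
  have base : ∃ g0, Good 0 g0 := by
    obtain ⟨g0, _, h2⟩ := exists_good (A 0) (Fin.elim0 : Fin 0 → Fin (β 0) → k)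
      linearIndependent_empty_type (fun t => t.elim0)
    rw [hrA 0] at h2
    exact ⟨g0, h2⟩
  have step : ∀ i (g : Matrix.GeneralLinearGroup (Fin (β i)) k), Good i g →
      ∃ g', Good (i + 1) g' ∧ (g').val * A i * ((g)⁻¹).val = NMat k β r i := by
    intro i g hg
    have hdet : IsUnit ((g⁻¹).val).det :=
      (Matrix.isUnit_iff_isUnit_det _).mp (g⁻¹).isUnit
    set M : Matrix (Fin (β (i + 1))) (Fin (β i)) k := A i * (g⁻¹).val with hM
    have hMrank : M.rank = r i := by
      rw [hM, Matrix.rank_mul_eq_left_of_isUnit_det _ _ hdet, hrA]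
    set v : Fin (r i) → (Fin (β (i + 1))) → k :=
      fun t => M.mulVec (Pi.single (⟨β i - r i + (t : ℕ), by have := hrβ i; omega⟩ : Fin (β i)) 1)
      with hv
    have hvind : LinearIndependent k v := cols_indep M hMrank (hrβ i) hg
    have hvker : ∀ t, (A (i + 1)).mulVec (v t) = 0 := by
      intro t
      rw [hv]
      simp only [Matrix.mulVec_mulVec]
      rw [hM, ← Matrix.mul_assoc, hA i, Matrix.zero_mul, Matrix.zero_mulVec]
    obtain ⟨g', h1, h2⟩ := exists_good (A (i + 1)) v hvind hvker
    rw [hrA (i + 1)] at h2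
    have key : M = (g'⁻¹).val * NMat k β r i := by
      ext p q
      rw [Matrix.mul_apply]
      by_cases hq : (q : ℕ) < β i - r i
      · have hMpq : M p q = 0 := hg q hq p
        rw [hMpq]
        symm; apply Finset.sum_eq_zero
        intro j _
        have hne : ¬ ((q : ℕ) = (j : ℕ) + (β i - r i)) := by omega
        simp [NMat, hne]
      · push_neg at hq
        have hqβ : (q : ℕ) < β i := q.2
        have htr : (q : ℕ) - (β i - r i) < r i := by have := hrβ i; omega
        have htm : (q : ℕ) - (β i - r i) < β (i + 1) := lt_of_lt_of_le htr (hrβ' i)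
        have hsum : ∀ j : Fin (β (i + 1)), (g'⁻¹).val p j * NMat k β r i j q
            = if j = (⟨(q : ℕ) - (β i - r i), htm⟩ : Fin (β (i + 1))) then (g'⁻¹).val p j
              else 0 := by
          intro j
          simp only [NMat, Matrix.of_apply]
          by_cases hj : (q : ℕ) = (j : ℕ) + (β i - r i)
          · have hj0 : j = (⟨(q : ℕ) - (β i - r i), htm⟩ : Fin (β (i + 1))) :=
              Fin.ext (by simp; omega)
            rw [if_pos hj, if_pos hj0, mul_one]
          · have hj0 : j ≠ (⟨(q : ℕ) - (β i - r i), htm⟩ : Fin (β (i + 1))) := by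
              intro h
              apply hj
              rw [h]
              simp
              omega
            rw [if_neg hj, if_neg hj0, mul_zero]
        rw [Finset.sum_congr rfl (fun j _ => hsum j), Finset.sum_ite_eq' Finset.univ _ _,
          if_pos (Finset.mem_univ _)]
        have hcol : (g'⁻¹).val p ⟨(q : ℕ) - (β i - r i), htm⟩
            = v ⟨(q : ℕ) - (β i - r i), htr⟩ p :=
          congrFun (h1 ⟨(q : ℕ) - (β i - r i), htr⟩ htm) p
        have hvval : v ⟨(q : ℕ) - (β i - r i), htr⟩ p = M p q := by
          simp only [hv, Matrix.mulVec_single_one, Matrix.col_apply]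
          congr 1
          exact Fin.ext (by simp; omega)
        rw [hcol, hvval]
    refine ⟨g', h2, ?_⟩
    calc (g').val * A i * ((g)⁻¹).val = (g').val * M := by rw [hM, Matrix.mul_assoc]
      _ = (g').val * ((g'⁻¹).val * NMat k β r i) := by rw [← key]
      _ = ((g' * g'⁻¹).val) * NMat k β r i := by
          rw [Units.val_mul, Matrix.mul_assoc]
      _ = NMat k β r i := by rw [mul_inv_cancel, Units.val_one, Matrix.one_mul]
  obtain ⟨g0, hg0⟩ := base
  let F : ∀ i, {g : Matrix.GeneralLinearGroup (Fin (β i)) k // Good i g} := fun i =>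
    Nat.rec ⟨g0, hg0⟩
      (fun j p => ⟨(step j p.1 p.2).choose, (step j p.1 p.2).choose_spec.1⟩) i
  exact ⟨fun i => (F i).1, fun i => (step i (F i).1 (F i).2).choose_spec.2⟩

/-- for a rank sequence `r` for `β`, the set `Com°(β, r)` of complexes
with `rank A_i = r_i` for all `i` is a single orbit under `GL(β)` acting by
simultaneous change of basis. -/
theorem complexes_with_fixed_ranks_single_orbit {k : Type} [Field k] (n : ℕ)
    (β r : ℕ → ℕ) (hβ : ∀ i, n + 1 ≤ i → β i = 0) (hr : IsRankSeq β r)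
    (A B : ∀ i : ℕ, Matrix (Fin (β (i + 1))) (Fin (β i)) k)
    (hA : ∀ i, A (i + 1) * A i = 0) (hB : ∀ i, B (i + 1) * B i = 0)
    (hrA : ∀ i, (A i).rank = r i) (hrB : ∀ i, (B i).rank = r i) :
    ∃ g : ∀ i : ℕ, Matrix.GeneralLinearGroup (Fin (β i)) k,
      ∀ i, B i = (g (i + 1)).val * A i * ((g i)⁻¹).val := by
  obtain ⟨gA, hgA⟩ := normalizeComplex β r hr A hA hrA
  obtain ⟨gB, hgB⟩ := normalizeComplex β r hr B hB hrB
  refine ⟨fun i => (gB i)⁻¹ * gA i, fun i => ?_⟩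
  have h2 : (gA (i + 1)).val * A i * ((gA i)⁻¹).val
      = (gB (i + 1)).val * B i * ((gB i)⁻¹).val := (hgA i).trans (hgB i).symm
  simp only [Units.val_mul, mul_inv_rev, inv_inv]
  calc B i
      = (((gB (i + 1))⁻¹).val * (gB (i + 1)).val) * B i
          * (((gB i)⁻¹).val * (gB i).val) := by
        rw [Units.inv_mul, Units.inv_mul, Matrix.one_mul, Matrix.mul_one]
    _ = ((gB (i + 1))⁻¹).val * ((gB (i + 1)).val * B i * ((gB i)⁻¹).val)
          * (gB i).val := by simp only [Matrix.mul_assoc]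
    _ = ((gB (i + 1))⁻¹).val * ((gA (i + 1)).val * A i * ((gA i)⁻¹).val)
          * (gB i).val := by rw [← h2]
    _ = ((gB (i + 1))⁻¹).val * (gA (i + 1)).val * A i
          * (((gA i)⁻¹).val * (gB i).val) := by simp only [Matrix.mul_assoc]
end

section
/- If r is a rank sequence for β and r' is obtained from r by decreasing one coordinate r_j by one (with r_j ≥ 1), then the orbit Com°(β, r') is contained in the Zariski closure of the orbit Com°(β, r). Consequently Com(β, r) = {A ∈ Com(β) : rank A_i ≤ r_i for all i} is the closure of Com°(β, r). -/
/-- Coordinates on the space of complexes with dimension vector `β`. -/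
abbrev CIdx (β : ℕ → ℕ) : Type := Σ i : ℕ, Fin (β (i + 1)) × Fin (β i)

/-- The coordinates of a tuple of matrices. -/
def coords {k : Type} [Field k] {β : ℕ → ℕ}
    (A : ∀ i, Matrix (Fin (β (i + 1))) (Fin (β i)) k) : CIdx β → k :=
  fun c => A c.1 c.2.1 c.2.2

/-- `A` lies in the Zariski closure of `T`: every polynomial function vanishing
identically on `T` vanishes at `A`. -/
def InZarClosure {k : Type} [Field k] {β : ℕ → ℕ}
    (T : Set (∀ i, Matrix (Fin (β (i + 1))) (Fin (β i)) k))
    (A : ∀ i, Matrix (Fin (β (i + 1))) (Fin (β i)) k) : Prop :=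
  ∀ f : MvPolynomial (CIdx β) k,
    (∀ B ∈ T, MvPolynomial.eval (coords B) f = 0) → MvPolynomial.eval (coords A) f = 0

/-- `Com°(β, r)`: complexes with exact ranks `r`. -/
def ComExact (k : Type) [Field k] (β r : ℕ → ℕ) :
    Set (∀ i, Matrix (Fin (β (i + 1))) (Fin (β i)) k) :=
  {A | (∀ i, A (i + 1) * A i = 0) ∧ ∀ i, (A i).rank = r i}

/-- `Com(β, r)`: complexes with ranks at most `r`. -/
def ComLe (k : Type) [Field k] (β r : ℕ → ℕ) :
    Set (∀ i, Matrix (Fin (β (i + 1))) (Fin (β i)) k) :=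
  {A | (∀ i, A (i + 1) * A i = 0) ∧ ∀ i, (A i).rank ≤ r i}

open Module Submodule Matrix

section Aux

variable {k : Type} [Field k]

/-- Select a linearly independent subfamily of prescribed size. -/
lemma exists_li_subfamily {V ι : Type*} [AddCommGroup V] [Module k V] [Fintype ι]
    (c : ι → V) (t : ℕ) (ht : t ≤ finrank k (span k (Set.range c))) :
    ∃ g : Fin t → ι, LinearIndependent k (c ∘ g) := by
  classical
  obtain ⟨b, hbsub, hbspan, hbli⟩ := exists_linearIndependent k (Set.range c)
  have hbfin : b.Finite := (Set.finite_range c).subset hbsub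
  haveI := hbfin.fintype
  have hcard : t ≤ Fintype.card b := by
    rw [← Set.toFinset_card, ← finrank_span_set_eq_card hbli, hbspan]
    exact ht
  obtain ⟨e⟩ := Function.Embedding.nonempty_of_card_le
    (show Fintype.card (Fin t) ≤ Fintype.card b by simpa using hcard)
  have h1 : ∀ i : Fin t, ∃ a : ι, c a = (e i : V) := fun i => hbsub (e i).2
  choose g hg using h1
  refine ⟨g, ?_⟩
  have hcg : c ∘ g = fun i => ((e i : V)) := funext fun i => hg i
  rw [hcg]
  exact hbli.comp e e.injective

lemma rank_submatrix_le'' {m n m' n' : Type*} [Fintype m] [Fintype n] [Fintype m'] [Fintype n']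
    [DecidableEq m] [DecidableEq n]
    (M : Matrix m n k) (f : m' → m) (g : n' → n) :
    (M.submatrix f g).rank ≤ M.rank := by
  classical
  have h1 : M.submatrix f id = (Matrix.of fun a b => if f a = b then (1 : k) else 0) * M := by
    ext a b
    rw [Matrix.mul_apply]
    simp [ite_mul]
  have h2 : (M.submatrix f id).submatrix id g
      = (M.submatrix f id) * (Matrix.of fun a b => if a = g b then (1 : k) else 0) := by
    ext a b
    rw [Matrix.mul_apply]
    simp [mul_ite]
  have h3 : M.submatrix f g = (M.submatrix f id).submatrix id g := rfl
  rw [h3, h2]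
  refine le_trans (Matrix.rank_mul_le_left _ _) ?_
  rw [h1]
  exact Matrix.rank_mul_le_right _ _

/-- A matrix has rank at most `s` iff all its `(s+1)`-minors vanish. -/
lemma rank_le_iff_dets {p q : ℕ} (M : Matrix (Fin p) (Fin q) k) (s : ℕ) :
    M.rank ≤ s ↔ ∀ (f : Fin (s + 1) → Fin p) (g : Fin (s + 1) → Fin q),
      (M.submatrix f g).det = 0 := by
  constructor
  · intro h f g
    by_contra hd
    have hu : IsUnit (M.submatrix f g) :=
      (Matrix.isUnit_iff_isUnit_det _).mpr (isUnit_iff_ne_zero.mpr hd)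
    have h1 : (M.submatrix f g).rank = s + 1 := by
      rw [Matrix.rank_of_isUnit _ hu, Fintype.card_fin]
    have h2 := rank_submatrix_le'' M f g
    omega
  · intro h
    by_contra hlt
    push_neg at hlt
    have h1 : s + 1 ≤ finrank k (span k (Set.range Mᵀ)) := by
      have hc := Matrix.rank_eq_finrank_span_cols M
      change s + 1 ≤ finrank k (span k (Set.range M.col)); omega
    obtain ⟨g, hg⟩ := exists_li_subfamily Mᵀ (s + 1) h1
    have hgN : LinearIndependent k (fun i => (M.submatrix id g)ᵀ i) := hg
    have hrkN : (M.submatrix id g).rank = s + 1 := by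
      rw [Matrix.rank_eq_finrank_span_cols]
      change finrank k (span k (Set.range fun i => (M.submatrix id g)ᵀ i)) = s + 1
      rw [finrank_span_eq_card hgN, Fintype.card_fin]
    have h2 : s + 1 ≤ finrank k (span k (Set.range ((M.submatrix id g)ᵀ)ᵀ)) := by
      change s + 1 ≤ finrank k (span k (Set.range ((M.submatrix id g)ᵀ).col))
      rw [← Matrix.rank_eq_finrank_span_cols, Matrix.rank_transpose, hrkN]
    obtain ⟨f, hf⟩ := exists_li_subfamily ((M.submatrix id g)ᵀ)ᵀ (s + 1) h2
    have hfP : LinearIndependent k (fun i => (M.submatrix f g) i) := hf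
    have hu : IsUnit (M.submatrix f g) := Matrix.linearIndependent_rows_iff_isUnit.mp hfP
    exact (isUnit_iff_ne_zero.mp ((Matrix.isUnit_iff_isUnit_det _).mp hu)) (h f g)

lemma exists_mem_notmem {V : Type*} [AddCommGroup V] [Module k V]
    (p q : Submodule k V) (hpq : p ≤ q) (h : finrank k p < finrank k q) :
    ∃ x ∈ q, x ∉ p :=
  SetLike.exists_of_lt (lt_of_le_of_ne hpq (fun he => h.ne (by rw [he])))

lemma exists_functional {V : Type*} [AddCommGroup V] [Module k V]
    (p : Submodule k V) (u : V) (hu : u ∉ p) :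
    ∃ φ : V →ₗ[k] k, (∀ x ∈ p, φ x = 0) ∧ φ u ≠ 0 := by
  have h1 : p.mkQ u ≠ 0 := by
    simpa [Submodule.mkQ_apply, Submodule.Quotient.mk_eq_zero] using hu
  obtain ⟨g, hg⟩ : ∃ g : Module.Dual k (V ⧸ p), g (p.mkQ u) ≠ 0 := by
    by_contra hcon
    push_neg at hcon
    exact h1 ((Module.forall_dual_apply_eq_zero_iff k _).mp hcon)
  refine ⟨g ∘ₗ p.mkQ, fun x hx => ?_, hg⟩
  rw [LinearMap.comp_apply, Submodule.mkQ_apply, (Submodule.Quotient.mk_eq_zero p).mpr hx,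
    map_zero]

/-- Rank of a rank-one perturbation. -/
lemma rank_perturb {m n : Type*} [Fintype m] [Fintype n]
    (M : Matrix m n k) (w : m → k) (v u : n → k) (t : k) (ht : t ≠ 0)
    (hw : w ∉ LinearMap.range M.mulVecLin) (hu : M.mulVec u = 0) (hvu : v ⬝ᵥ u ≠ 0) :
    (M + t • Matrix.vecMulVec w v).rank = M.rank + 1 := by
  classical
  have h2 : ∀ x, (Matrix.vecMulVec w v).mulVec x = (v ⬝ᵥ x) • w := by
    intro x
    funext a
    have hl : (Matrix.vecMulVec w v).mulVec x a = ∑ c, (w a * v c) * x c := by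
      simp [Matrix.mulVec, dotProduct, Matrix.vecMulVec_apply]
    rw [hl, Pi.smul_apply, smul_eq_mul]
    calc ∑ c, (w a * v c) * x c = ∑ c, (v c * x c) * w a :=
          Finset.sum_congr rfl fun c _ => by ring
      _ = (∑ c, v c * x c) * w a := (Finset.sum_mul _ _ _).symm
      _ = (v ⬝ᵥ x) * w a := rfl
  have hLx : ∀ x, (M + t • Matrix.vecMulVec w v).mulVecLin x
      = M.mulVec x + (t * (v ⬝ᵥ x)) • w := by
    intro x
    show (M + t • Matrix.vecMulVec w v).mulVec x = _
    rw [Matrix.add_mulVec, Matrix.smul_mulVec, h2, smul_smul]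
  set S := LinearMap.range M.mulVecLin with hS
  have hwr : w ∈ LinearMap.range (M + t • Matrix.vecMulVec w v).mulVecLin := by
    refine ⟨(t * (v ⬝ᵥ u))⁻¹ • u, ?_⟩
    rw [_root_.map_smul, hLx, hu, zero_add, smul_smul, inv_mul_cancel₀ (mul_ne_zero ht hvu), one_smul]
  have hrange : LinearMap.range (M + t • Matrix.vecMulVec w v).mulVecLin
      = S ⊔ span k {w} := by
    apply le_antisymm
    · rintro y ⟨x, rfl⟩
      rw [hLx]
      exact Submodule.add_mem _ (Submodule.mem_sup_left (LinearMap.mem_range_self _ x))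
        (Submodule.mem_sup_right (Submodule.smul_mem _ _ (Submodule.mem_span_singleton_self w)))
    · refine sup_le ?_ ?_
      · rintro y ⟨x, rfl⟩
        have hx : M.mulVecLin x
            = (M + t • Matrix.vecMulVec w v).mulVecLin x - (t * (v ⬝ᵥ x)) • w := by
          rw [hLx, add_sub_cancel_right]
          rfl
        rw [hx]
        exact Submodule.sub_mem _ (LinearMap.mem_range_self _ x) (Submodule.smul_mem _ _ hwr)
      · rw [Submodule.span_le, Set.singleton_subset_iff]
        exact hwr
  have hw0 : w ≠ 0 := fun h0 => hw (h0 ▸ Submodule.zero_mem S)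
  have hinf : S ⊓ span k {w} = ⊥ := by
    rw [eq_bot_iff]
    intro x hx
    rw [Submodule.mem_inf] at hx
    obtain ⟨hxS, hxw⟩ := hx
    obtain ⟨c, rfl⟩ := Submodule.mem_span_singleton.mp hxw
    rcases eq_or_ne c 0 with rfl | hc
    · simp
    · exfalso
      apply hw
      have hmem := Submodule.smul_mem S c⁻¹ hxS
      rwa [smul_smul, inv_mul_cancel₀ hc, one_smul] at hmem
  have hfin := Submodule.finrank_sup_add_finrank_inf_eq S (span k {w})
  rw [hinf, finrank_span_singleton hw0] at hfin
  simp only [finrank_bot, add_zero] at hfin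
  show finrank k (LinearMap.range (M + t • Matrix.vecMulVec w v).mulVecLin) = finrank k S + 1
  rw [hrange, hfin]

/-- The perturbation step: from a complex with ranks `update s j (s j - 1)` one can move
into `Com°(β, s)` along a line. -/
lemma pert_main (β s : ℕ → ℕ) (hs : IsRankSeq β s) (j : ℕ) (hj : 1 ≤ s j)
    (A : ∀ i, Matrix (Fin (β (i + 1))) (Fin (β i)) k)
    (hA : A ∈ ComExact k β (Function.update s j (s j - 1))) :
    ∃ W' : ∀ i, Matrix (Fin (β (i + 1))) (Fin (β i)) k,
      ∀ t : k, t ≠ 0 → (fun i => A i + t • W' i) ∈ ComExact k β s := by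
  classical
  obtain ⟨hAc, hArk⟩ := hA
  have hrkj : (A j).rank = s j - 1 := by simpa using hArk j
  have hrk : ∀ i, i ≠ j → (A i).rank = s i := fun i hi => by
    simpa [Function.update_of_ne hi] using hArk i
  -- choose u and v
  have huv : ∃ (v u : Fin (β j) → k), (A j).mulVec u = 0 ∧ v ⬝ᵥ u ≠ 0 ∧
      ∀ (i : ℕ) (h : i + 1 = j) (b : Fin (β i)),
        (∑ a : Fin (β (i + 1)), v (Fin.cast (congrArg β h) a) * A i a b) = 0 := by
    revert hj hrkj hrk
    cases j with
    | zero =>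
      intro hj hrkj _
      have h1 : (A 0).rank + finrank k (LinearMap.ker (A 0).mulVecLin) = β 0 := by
        have := LinearMap.finrank_range_add_finrank_ker (A 0).mulVecLin
        rwa [Module.finrank_fin_fun] at this
      have hker : 0 < finrank k (LinearMap.ker (A 0).mulVecLin) := by
        have h3 := hs.1
        rw [hrkj] at h1
        omega
      obtain ⟨u, huk, hune⟩ := exists_mem_notmem ⊥ (LinearMap.ker (A 0).mulVecLin) bot_le
        (by rw [finrank_bot]; exact hker)
      have hune' : u ≠ 0 := by simpa using hune
      have hb : ∃ b, u b ≠ 0 := by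
        by_contra hcon
        push_neg at hcon
        exact hune' (funext hcon)
      obtain ⟨b0, hb0⟩ := hb
      refine ⟨fun a => if a = b0 then 1 else 0, u, LinearMap.mem_ker.mp huk, ?_, ?_⟩
      · have hd : (fun a => if a = b0 then (1 : k) else 0) ⬝ᵥ u = u b0 := by
          simp [dotProduct, ite_mul]
        rw [hd]
        exact hb0
      · intro i h
        exact absurd h (Nat.succ_ne_zero i)
    | succ i0 =>
      intro hj hrkj hrk
      have hsub2 : LinearMap.range (A i0).mulVecLin ≤ LinearMap.ker (A (i0 + 1)).mulVecLin := by
        rw [LinearMap.range_le_ker_iff, ← Matrix.mulVecLin_mul, hAc i0, Matrix.mulVecLin_zero]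
      have h1 : (A (i0 + 1)).rank + finrank k (LinearMap.ker (A (i0 + 1)).mulVecLin)
          = β (i0 + 1) := by
        have := LinearMap.finrank_range_add_finrank_ker (A (i0 + 1)).mulVecLin
        rwa [Module.finrank_fin_fun] at this
      have hdim2 : finrank k (LinearMap.range (A i0).mulVecLin)
          < finrank k (LinearMap.ker (A (i0 + 1)).mulVecLin) := by
        have h2 : finrank k (LinearMap.range (A i0).mulVecLin) = s i0 := hrk i0 (by omega)
        have h3 := hs.2 i0
        rw [hrkj] at h1
        omega
      obtain ⟨u, huk, hunp⟩ := exists_mem_notmem _ _ hsub2 hdim2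
      obtain ⟨φ, hφ0, hφu⟩ := exists_functional _ u hunp
      have hdot : ∀ x : Fin (β (i0 + 1)) → k,
          (fun a => φ fun b => if a = b then (1 : k) else 0) ⬝ᵥ x = φ x := by
        intro x
        rw [LinearMap.pi_apply_eq_sum_univ φ x]
        simp [dotProduct, mul_comm]
      refine ⟨fun a => φ fun b => if a = b then (1 : k) else 0, u,
        LinearMap.mem_ker.mp huk, ?_, ?_⟩
      · rw [hdot]
        exact hφu
      · intro i h b
        have hi : i = i0 := by omega
        subst hi
        have hcol : (fun a => A i a b) ∈ LinearMap.range (A i).mulVecLin := by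
          refine ⟨fun c => if c = b then 1 else 0, ?_⟩
          funext a
          simp [Matrix.mulVecLin_apply, Matrix.mulVec, dotProduct, mul_ite]
        have hz : (fun a => φ fun b' => if a = b' then (1 : k) else 0) ⬝ᵥ (fun a => A i a b)
            = 0 := by
          rw [hdot]
          exact hφ0 _ hcol
        exact hz
  obtain ⟨v, u, humul, hvu, hvcol⟩ := huv
  -- choose w
  have hsub : LinearMap.range (A j).mulVecLin ≤ LinearMap.ker (A (j + 1)).mulVecLin := by
    rw [LinearMap.range_le_ker_iff, ← Matrix.mulVecLin_mul, hAc j, Matrix.mulVecLin_zero]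
  have hdim : finrank k (LinearMap.range (A j).mulVecLin)
      < finrank k (LinearMap.ker (A (j + 1)).mulVecLin) := by
    have h1 : (A (j + 1)).rank + finrank k (LinearMap.ker (A (j + 1)).mulVecLin)
        = β (j + 1) := by
      have := LinearMap.finrank_range_add_finrank_ker (A (j + 1)).mulVecLin
      rwa [Module.finrank_fin_fun] at this
    have h2 : (A (j + 1)).rank = s (j + 1) := hrk (j + 1) (Nat.succ_ne_self j)
    have h3 := hs.2 j
    have h4 : finrank k (LinearMap.range (A j).mulVecLin) = s j - 1 := hrkj
    omega
  obtain ⟨w, hwker, hwnr⟩ := exists_mem_notmem _ _ hsub hdim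
  have hwmul : (A (j + 1)).mulVec w = 0 := LinearMap.mem_ker.mp hwker
  refine ⟨Function.update (fun i => (0 : Matrix (Fin (β (i + 1))) (Fin (β i)) k)) j
    (Matrix.vecMulVec w v), fun t ht => ⟨?_, ?_⟩⟩
  · -- the complex conditions
    intro i
    dsimp only
    rcases eq_or_ne (i + 1) j with hij | hij
    · subst hij
      rw [Function.update_self, Function.update_of_ne (show i ≠ i + 1 by omega), smul_zero,
        add_zero, Matrix.add_mul, hAc i, Matrix.smul_mul, zero_add]
      have hz : Matrix.vecMulVec w v * A i = 0 := by
        ext a b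
        rw [Matrix.mul_apply, Matrix.zero_apply]
        simp only [Matrix.vecMulVec_apply]
        have h0 := hvcol i rfl b
        calc ∑ c, w a * v c * A i c b = w a * ∑ c, v c * A i c b := by
              rw [Finset.mul_sum]
              exact Finset.sum_congr rfl fun c _ => by ring
          _ = 0 := by
              rw [show (∑ c, v c * A i c b) = 0 from h0, mul_zero]
      rw [hz, smul_zero]
    · rcases eq_or_ne i j with hij2 | hij2
      · subst hij2
        rw [Function.update_of_ne (show i + 1 ≠ i by omega), Function.update_self, smul_zero,
          add_zero, Matrix.mul_add, hAc i, Matrix.mul_smul, zero_add]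
        have hz : A (i + 1) * Matrix.vecMulVec w v = 0 := by
          ext a b
          rw [Matrix.mul_apply, Matrix.zero_apply]
          simp only [Matrix.vecMulVec_apply]
          have h0 : (∑ c, A (i + 1) a c * w c) = 0 := congrFun hwmul a
          calc ∑ c, A (i + 1) a c * (w c * v b) = (∑ c, A (i + 1) a c * w c) * v b := by
                rw [Finset.sum_mul]
                exact Finset.sum_congr rfl fun c _ => by ring
            _ = 0 := by rw [h0, zero_mul]
        rw [hz, smul_zero]
      · rw [Function.update_of_ne hij, Function.update_of_ne hij2, smul_zero, smul_zero,
          add_zero, add_zero]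
        exact hAc i
  · -- the rank conditions
    intro i
    dsimp only
    rcases eq_or_ne i j with rfl | hij
    · rw [Function.update_self]
      rw [rank_perturb (A i) w v u t ht hwnr humul hvu, hrkj]
      omega
    · rw [Function.update_of_ne hij, smul_zero, add_zero]
      exact hrk i hij

/-- STATEMENT-4, first half, as a standalone lemma. -/
lemma key [Infinite k] (β s : ℕ → ℕ) (hs : IsRankSeq β s) (j : ℕ) (hj : 1 ≤ s j) :
    ∀ A ∈ ComExact k β (Function.update s j (s j - 1)),
      InZarClosure (ComExact k β s) A := by
  intro A hA f hf
  obtain ⟨W', hW'⟩ := pert_main β s hs j hj A hA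
  set P : Polynomial k := MvPolynomial.eval₂ Polynomial.C
      (fun c => Polynomial.C (coords A c) + Polynomial.C (coords W' c) * Polynomial.X) f with hP
  have heval : ∀ t : k,
      Polynomial.eval t P = MvPolynomial.eval (coords fun i => A i + t • W' i) f := by
    intro t
    have h1 := MvPolynomial.eval₂_comp_left (Polynomial.evalRingHom t) Polynomial.C
      (fun c => Polynomial.C (coords A c) + Polynomial.C (coords W' c) * Polynomial.X) f
    have hc : (Polynomial.evalRingHom t).comp Polynomial.C = RingHom.id k := by
      ext a
      simp
    have hg : ((Polynomial.evalRingHom t) ∘ fun c =>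
        Polynomial.C (coords A c) + Polynomial.C (coords W' c) * Polynomial.X)
        = fun c => coords A c + coords W' c * t := by
      funext c
      simp
    rw [hc, hg, MvPolynomial.eval₂_id] at h1
    have hco : (coords fun i => A i + t • W' i) = fun c => coords A c + coords W' c * t := by
      funext c
      rcases c with ⟨i, a, b⟩
      simp [coords, mul_comm]
    rw [hco]
    exact h1
  have hzero : ∀ t : k, t ≠ 0 → Polynomial.eval t P = 0 := by
    intro t ht
    rw [heval t]
    exact hf _ (hW' t ht)
  have hP0 : P = 0 := by
    apply Polynomial.eq_zero_of_infinite_isRoot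
    apply Set.Infinite.mono (s := {x : k | x ≠ 0})
    · intro t ht
      exact hzero t ht
    · exact (Set.finite_singleton (0 : k)).infinite_compl
  have h0 := heval 0
  rw [hP0, Polynomial.eval_zero] at h0
  have h2 : (fun i => A i + (0 : k) • W' i) = A := by
    funext i
    simp
  rw [h2] at h0
  exact h0.symm

/-- Going up from ranks `s ≤ r` to ranks `r`, by induction. -/
lemma up [Infinite k] (β r : ℕ → ℕ) (hr : IsRankSeq β r) (n : ℕ)
    (hr0 : ∀ i, n ≤ i → r i = 0) :
    ∀ (m : ℕ) (s : ℕ → ℕ), (∀ i, s i ≤ r i) →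
      (∑ i ∈ Finset.range n, (r i - s i)) ≤ m →
      ∀ A ∈ ComExact k β s, InZarClosure (ComExact k β r) A := by
  intro m
  induction m with
  | zero =>
    intro s hs hsum A hA
    have hseq : s = r := by
      funext i
      rcases lt_or_ge i n with hi | hi
      · have h1 : r i - s i = 0 :=
          Finset.sum_eq_zero_iff.mp (Nat.le_zero.mp hsum) i (Finset.mem_range.mpr hi)
        have h2 := hs i
        omega
      · have h1 := hr0 i hi
        have h2 := hs i
        omega
    subst hseq
    exact fun f hf => hf A hA
  | succ m ih =>
    intro s hs hsum A hA
    by_cases hq : ∀ i, s i = r i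
    · have hseq : s = r := funext hq
      subst hseq
      exact fun f hf => hf A hA
    · push_neg at hq
      obtain ⟨j, hj⟩ := hq
      have hjlt : s j < r j := lt_of_le_of_ne (hs j) hj
      have hjn : j < n := by
        by_contra hcon
        have := hr0 j (by omega)
        omega
      set s' := Function.update s j (s j + 1) with hs'
      have hs'le : ∀ i, s' i ≤ r i := by
        intro i
        rcases eq_or_ne i j with rfl | h
        · rw [hs', Function.update_self]
          omega
        · rw [hs', Function.update_of_ne h]
          exact hs i
      have hs'rank : IsRankSeq β s' :=
        ⟨le_trans (hs'le 0) hr.1,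
          fun i => le_trans (Nat.add_le_add (hs'le i) (hs'le (i + 1))) (hr.2 i)⟩
      have h1j : 1 ≤ s' j := by
        rw [hs', Function.update_self]
        omega
      have hupd : Function.update s' j (s' j - 1) = s := by
        rw [hs', Function.update_self, Function.update_idem, Nat.add_sub_cancel,
          Function.update_eq_self]
      have hAz : A ∈ ComExact k β (Function.update s' j (s' j - 1)) := by
        rw [hupd]
        exact hA
      have hstep := key β s' hs'rank j h1j A hAz
      have hsum' : (∑ i ∈ Finset.range n, (r i - s' i)) ≤ m := by
        have e1 := Finset.add_sum_erase (Finset.range n) (fun i => r i - s i)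
          (Finset.mem_range.mpr hjn)
        have e2 := Finset.add_sum_erase (Finset.range n) (fun i => r i - s' i)
          (Finset.mem_range.mpr hjn)
        have e3 : ∑ i ∈ (Finset.range n).erase j, (r i - s' i)
            = ∑ i ∈ (Finset.range n).erase j, (r i - s i) :=
          Finset.sum_congr rfl fun i hi => by
            rw [hs', Function.update_of_ne (Finset.ne_of_mem_erase hi)]
        have e4 : s' j = s j + 1 := by rw [hs', Function.update_self]
        rw [e4, e3] at e2
        omega
      intro f hf
      exact hstep f (fun B hB => ih s' hs'le hsum' B hB f hf)

end Aux

/-- if `r'` is obtained from the rank sequence `r` by decreasing one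
coordinate `r j ≥ 1` by one, then the orbit `Com°(β, r')` is contained in the Zariski
closure of `Com°(β, r)`; consequently `Com(β, r)` is the closure of `Com°(β, r)`. -/
theorem orbit_closure_of_complexes {k : Type} [Field k] [IsAlgClosed k] (n : ℕ)
    (β : ℕ → ℕ) (hβ : ∀ i, n + 1 ≤ i → β i = 0) (r : ℕ → ℕ) (hr : IsRankSeq β r)
    (j : ℕ) (hj : 1 ≤ r j) :
    (∀ A ∈ ComExact k β (Function.update r j (r j - 1)),
      InZarClosure (ComExact k β r) A) ∧
    ComLe k β r = {A | InZarClosure (ComExact k β r) A} := by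
  classical
  have hr0 : ∀ i, n ≤ i → r i = 0 := by
    intro i hi
    have h1 := hr.2 i
    rw [hβ (i + 1) (by omega)] at h1
    omega
  constructor
  · exact key β r hr j hj
  · apply Set.eq_of_subset_of_subset
    · -- ComLe ⊆ closure
      intro A hA
      exact up β r hr n hr0 (∑ i ∈ Finset.range n, (r i - (A i).rank))
        (fun i => (A i).rank) (fun i => hA.2 i) le_rfl A ⟨hA.1, fun i => rfl⟩
    · -- closure ⊆ ComLe
      intro A hA
      refine ⟨?_, ?_⟩
      · intro i
        ext a b
        have hvan : ∀ B ∈ ComExact k β r, MvPolynomial.eval (coords B)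
            (∑ c : Fin (β (i + 1)), MvPolynomial.X (⟨i + 1, (a, c)⟩ : CIdx β)
              * MvPolynomial.X (⟨i, (c, b)⟩ : CIdx β)) = 0 := by
          intro B hB
          rw [map_sum]
          simp only [_root_.map_mul, MvPolynomial.eval_X]
          have hsum : (∑ c, coords B ⟨i + 1, (a, c)⟩ * coords B ⟨i, (c, b)⟩)
              = (B (i + 1) * B i) a b := by
            rw [Matrix.mul_apply]
            rfl
          rw [hsum, hB.1 i, Matrix.zero_apply]
        have hz := hA _ hvan
        rw [map_sum] at hz
        simp only [_root_.map_mul, MvPolynomial.eval_X] at hz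
        rw [Matrix.zero_apply, Matrix.mul_apply]
        exact hz
      · intro i
        rw [rank_le_iff_dets]
        intro fr gc
        have hvan : ∀ B ∈ ComExact k β r, MvPolynomial.eval (coords B)
            (Matrix.det (Matrix.of fun a b =>
              MvPolynomial.X (⟨i, (fr a, gc b)⟩ : CIdx β))) = 0 := by
          intro B hB
          rw [RingHom.map_det]
          have hmap : (MvPolynomial.eval (coords B)).mapMatrix
              (Matrix.of fun a b => MvPolynomial.X (⟨i, (fr a, gc b)⟩ : CIdx β))
              = (B i).submatrix fr gc := by
            ext a b
            simp [RingHom.mapMatrix_apply, coords]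
          rw [hmap]
          exact (rank_le_iff_dets (B i) (r i)).mp (le_of_eq (hB.2 i)) fr gc
        have hz := hA _ hvan
        rw [RingHom.map_det] at hz
        have hmap : (MvPolynomial.eval (coords A)).mapMatrix
            (Matrix.of fun a b => MvPolynomial.X (⟨i, (fr a, gc b)⟩ : CIdx β))
            = (A i).submatrix fr gc := by
          ext a b
          simp [RingHom.mapMatrix_apply, coords]
        rw [hmap] at hz
        exact hz
end

section
/- Let Q be a quiver with a coloring c having color set S, and for each color s let X_s, A_s, β^s, r^s be the vertices, arrows, dimension vector and rank sequence restricted to the path of color s. Then the variety Rep_{Q,c}(β, r) = {M ∈ Rep_{kQ/I_c}(β) : rank M(a) ≤ r(a) for all a ∈ Q_1} is isomorphic as a variety to the product over s ∈ S of the varieties of complexes Com_{|X_s|}(β^s, r^s). -/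
open scoped Classical

/-- A colored quiver, presented in standard form: a set of colors `S`, and for each
color `s` a directed path with `len s` arrows visiting the vertices
`vert s 0, vert s 1, …, vert s (len s)`.  The arrows of the quiver are the pairs
`(s, j)` with `j < len s`, and the coloring is the first projection; the associated
gentle string algebra is `kQ/I_c` where `I_c` is generated by the monochromatic
paths of length two. -/
structure CQuiv where
  V : Type
  S : Type
  len : S → ℕ
  vert : S → ℕ → V

namespace CQuiv

variable (Q : CQuiv)

/-- The arrows of the colored quiver. -/
def Arrow : Type := Σ s : Q.S, Fin (Q.len s)

instance [Fintype Q.S] : Fintype Q.Arrow :=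
  inferInstanceAs (Fintype (Σ s : Q.S, Fin (Q.len s)))

/-- Tail (source) of an arrow. -/
def tail (a : Q.Arrow) : Q.V := Q.vert a.1 (a.2 : ℕ)

/-- Head (target) of an arrow. -/
def head (a : Q.Arrow) : Q.V := Q.vert a.1 ((a.2 : ℕ) + 1)

/-- One step of the arrow relation on vertices. -/
def Step (x y : Q.V) : Prop := ∃ a : Q.Arrow, Q.tail a = x ∧ Q.head a = y

/-- The quiver has neither loops nor oriented cycles. -/
def Acyclic : Prop := ∀ x : Q.V, ¬ Relation.TransGen Q.Step x x

/-- The color `s` passes through the vertex `x`. -/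
def Through (x : Q.V) (s : Q.S) : Prop := ∃ j, j ≤ Q.len s ∧ Q.vert s j = x

/-- A lonely vertex: exactly one color passes through it. -/
def Lonely (x : Q.V) : Prop :=
  (∃ s, Q.Through x s) ∧ ∀ s s', Q.Through x s → Q.Through x s' → s = s'

/-- A coupled vertex: two distinct colors pass through it. -/
def Coupled (x : Q.V) : Prop := ∃ s s', s ≠ s' ∧ Q.Through x s ∧ Q.Through x s'

/-- Total value of `r` on the arrows of color `s` entering `x` (this is `r(i(x,s))`,
with the convention `r ∅ = 0`, when the quiver is acyclic). -/
noncomputable def rIn (r : Q.Arrow → ℕ) (x : Q.V) (s : Q.S) : ℕ :=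
  ∑ j : Fin (Q.len s), if Q.head ⟨s, j⟩ = x then r ⟨s, j⟩ else 0

/-- Total value of `r` on the arrows of color `s` leaving `x` (this is `r(o(x,s))`). -/
noncomputable def rOut (r : Q.Arrow → ℕ) (x : Q.V) (s : Q.S) : ℕ :=
  ∑ j : Fin (Q.len s), if Q.tail ⟨s, j⟩ = x then r ⟨s, j⟩ else 0

variable (β : Q.V → ℕ)

/-- A rank sequence for `β`: `r(i(x,s)) + r(o(x,s)) ≤ β x` for all `(x, s)`. -/
def IsRankSeq (r : Q.Arrow → ℕ) : Prop :=
  ∀ (x : Q.V) (s : Q.S), Q.rIn r x s + Q.rOut r x s ≤ β x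

/-- A maximal rank sequence (coordinate-wise partial order). -/
def IsMaxRankSeq (r : Q.Arrow → ℕ) : Prop :=
  Q.IsRankSeq β r ∧ ∀ r', Q.IsRankSeq β r' → (∀ a, r a ≤ r' a) → r' = r

/-- `lam ∈ Λ(Q,c,β,r)`: each `lam a` is a partition (written as an antitone function,
`lam a i` being the `(i+1)`-st part) with at most `r a` nonzero parts. -/
def IsLam (r : Q.Arrow → ℕ) (lam : Q.Arrow → ℕ → ℕ) : Prop :=
  (∀ a, Antitone (lam a)) ∧ ∀ a i, r a ≤ i → lam a i = 0

/-- The `(i+1)`-st part of `lam(o(x,s))` (with `lam ∅ = 0`). -/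
noncomputable def outPart (lam : Q.Arrow → ℕ → ℕ) (x : Q.V) (s : Q.S) (i : ℕ) : ℕ :=
  ∑ j : Fin (Q.len s), if Q.tail ⟨s, j⟩ = x then lam ⟨s, j⟩ i else 0

/-- The `(i+1)`-st part of `lam(i(x,s))` (with `lam ∅ = 0`). -/
noncomputable def inPart (lam : Q.Arrow → ℕ → ℕ) (x : Q.V) (s : Q.S) (i : ℕ) : ℕ :=
  ∑ j : Fin (Q.len s), if Q.head ⟨s, j⟩ = x then lam ⟨s, j⟩ i else 0

/-- The `(i+1)`-st entry of the rational weight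
`λ(x,s) = (λ(o(x,s)), 0, …, 0, -λ(i(x,s)))` of `GL(β x)`. -/
noncomputable def wt (lam : Q.Arrow → ℕ → ℕ) (x : Q.V) (s : Q.S) (i : ℕ) : ℤ :=
  (Q.outPart lam x s i : ℤ) - (Q.inPart lam x s (β x - 1 - i) : ℤ)

/-- The Cauchy (rectangle) criterion: there is `σ ∈ ℤ^{Q₀}` such that at every
coupled vertex `λ(x,s₁)_i + λ(x,s₂)_{β_x+1-i} = σ_x` for all `i`, and at every
lonely vertex `λ(x,s)_i = σ_x` for all `i`. -/
def CauchyCond (lam : Q.Arrow → ℕ → ℕ) : Prop :=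
  ∃ σ : Q.V → ℤ, ∀ x : Q.V,
    (∀ s t, s ≠ t → Q.Through x s → Q.Through x t →
      ∀ i, i < β x → Q.wt β lam x s i + Q.wt β lam x t (β x - 1 - i) = σ x) ∧
    (Q.Lonely x → ∀ s, Q.Through x s → ∀ i, i < β x → Q.wt β lam x s i = σ x)

/-- Membership in the semigroup `Λ_SI(Q, c, β, r)`. -/
def InLamSI (r : Q.Arrow → ℕ) (lam : Q.Arrow → ℕ → ℕ) : Prop :=
  Q.IsLam r lam ∧ Q.CauchyCond β lam

/-- Labeled simple roots `α_i^{(x,s)}`: triples `(x, s, i)`. -/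
def Root : Type := Q.V × Q.S × ℕ

/-- A valid labeled simple root: `s` passes through `x` and `1 ≤ i ≤ β x - 1`. -/
def IsRoot (p : Q.Root) : Prop :=
  Q.Through p.1 p.2.1 ∧ 1 ≤ p.2.2 ∧ p.2.2 + 1 ≤ β p.1

/-- Edges of the partition equivalence graph: a non-colored edge
`α_i^{(x,s₁)} — α_{β_x-i}^{(x,s₂)}` at each coupled vertex, and for each arrow `a`
of color `s` a colored edge `α_i^{(ta,s)} — α_{β_{ha}-i}^{(ha,s)}`, `1 ≤ i ≤ r a - 1`. -/
def AdjRaw (r : Q.Arrow → ℕ) (p q : Q.Root) : Prop :=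
  (Q.IsRoot β p ∧ Q.IsRoot β q) ∧
    ((p.1 = q.1 ∧ p.2.1 ≠ q.2.1 ∧ p.2.2 + q.2.2 = β p.1) ∨
     (∃ a : Q.Arrow, a.1 = p.2.1 ∧ a.1 = q.2.1 ∧ Q.tail a = p.1 ∧ Q.head a = q.1 ∧
       p.2.2 + 1 ≤ r a ∧ p.2.2 + q.2.2 = β q.1))

/-- Adjacency in the partition equivalence graph `PEG(Q, c, β, r)`. -/
def PegAdj (r : Q.Arrow → ℕ) (p q : Q.Root) : Prop :=
  Q.AdjRaw β r p q ∨ Q.AdjRaw β r q p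

/-- Two roots lie in the same connected component of the PEG. -/
def PegConn (r : Q.Arrow → ℕ) : Q.Root → Q.Root → Prop :=
  Relation.ReflTransGen (Q.PegAdj β r)

/-- The value `f_λ(α_i^{(x,s)}) = λ(x,s)_i - λ(x,s)_{i+1}` of a labeled simple root. -/
noncomputable def froot (lam : Q.Arrow → ℕ → ℕ) (p : Q.Root) : ℤ :=
  Q.wt β lam p.1 p.2.1 (p.2.2 - 1) - Q.wt β lam p.1 p.2.1 p.2.2

/-- An endpoint of the PEG: a valid root with at most one neighbor. -/
def IsEndpoint (r : Q.Arrow → ℕ) (p : Q.Root) : Prop :=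
  Q.IsRoot β p ∧ {q | Q.PegAdj β r p q}.Subsingleton

/-- The companion function `φ_u` of `u : Q₁ → ℕ`, evaluated at a root `e`: it equals
`u(o(x,s)) + u(i(x,s))`, `u(o(x,s))`, `u(i(x,s))` or `0` at endpoints of type
(Ia), (Ib), (Ic), (Id)/(II) respectively. -/
noncomputable def phi (r u : Q.Arrow → ℕ) (p : Q.Root) : ℕ :=
  (if Q.Coupled p.1 ∧ p.2.2 = Q.rOut r p.1 p.2.1 then Q.rOut u p.1 p.2.1 else 0) +
  (if Q.Coupled p.1 ∧ p.2.2 + Q.rIn r p.1 p.2.1 = β p.1 then Q.rIn u p.1 p.2.1 else 0)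

/-- The matching semigroup `U(Q, c, β, r)`: functions `u : Q₁ → ℕ` whose companion
function takes equal values at the two endpoints of each string of the PEG. -/
def USet (r : Q.Arrow → ℕ) : Set (Q.Arrow → ℕ) :=
  {u | ∀ p q, Q.IsEndpoint β r p → Q.IsEndpoint β r q → Q.PegConn β r p q →
    Q.phi β r u p = Q.phi β r u q}

end CQuiv

namespace CQuiv

variable (Q : CQuiv) (β : Q.V → ℕ) (r : Q.Arrow → ℕ) (k : Type) [Field k]

/-- A point of the representation space: one matrix for each arrow `(s, j)`. -/
abbrev RepPoint : Type :=
  ∀ (s : Q.S) (j : ℕ), Matrix (Fin (β (Q.vert s (j + 1)))) (Fin (β (Q.vert s j))) k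

/-- `Rep_{Q,c}(β, r)`: tuples of matrices annihilating all monochromatic length-two
paths (the relations of `I_c`) and with `rank M(a) ≤ r(a)` for every arrow. -/
def RepRankSet : Set (Q.RepPoint β k) :=
  {x | (∀ (s : Q.S) (j j' : ℕ), j < Q.len s → j' < Q.len s →
          ∀ hc : Q.vert s (j + 1) = Q.vert s j',
            x s j' * (x s j).submatrix (Fin.cast (congrArg β hc).symm) id = 0) ∧
       ∀ (s : Q.S) (j : ℕ) (hj : j < Q.len s), (x s j).rank ≤ r ⟨s, ⟨j, hj⟩⟩}

/-- The variety of complexes `Com_{|X_s|}(β^s, r^s)` attached to the color `s`. -/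
def ComAlong (s : Q.S) :
    Set (∀ j : ℕ, Matrix (Fin (β (Q.vert s (j + 1)))) (Fin (β (Q.vert s j))) k) :=
  {y | (∀ j, j + 1 < Q.len s → y (j + 1) * y j = 0) ∧
       ∀ (j : ℕ) (hj : j < Q.len s), (y j).rank ≤ r ⟨s, ⟨j, hj⟩⟩}

end CQuiv


lemma submatrix_cast_self' {k : Type} [Field k] {m n : ℕ} (M : Matrix (Fin m) (Fin n) k)
    (h : m = m) : M.submatrix (Fin.cast h) id = M := by
  ext i j
  simp [Matrix.submatrix, Fin.cast]

lemma CQuiv.path_along (Q : CQuiv) (s : Q.S) :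
    ∀ b a : ℕ, a < b → b ≤ Q.len s →
      Relation.TransGen Q.Step (Q.vert s a) (Q.vert s b) := by
  intro b
  induction b with
  | zero => intro a h; omega
  | succ m ih =>
    intro a hab hb
    have hstep : Q.Step (Q.vert s m) (Q.vert s (m + 1)) :=
      ⟨⟨s, ⟨m, by omega⟩⟩, rfl, rfl⟩
    rcases Nat.lt_or_ge a m with h | h
    · exact (ih a h (by omega)).tail hstep
    · have : a = m := by omega
      subst this
      exact Relation.TransGen.single hstep

/-- for an acyclic colored quiver, the variety `Rep_{Q,c}(β, r)` is
(isomorphic to) the product over the colors `s` of the varieties of complexes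
`Com_{|X_s|}(β^s, r^s)`: inside the ambient product space it *is* that product. -/
theorem rep_is_product_of_complexes {Q : CQuiv} (β : Q.V → ℕ) (r : Q.Arrow → ℕ)
    (k : Type) [Field k] (hQ : Q.Acyclic) (hr : Q.IsRankSeq β r) :
    Q.RepRankSet β r k = Set.pi Set.univ (fun s : Q.S => Q.ComAlong β r k s) := by
  ext x
  constructor
  · rintro ⟨hrel, hrk⟩ s _
    refine ⟨fun j hj => ?_, hrk s⟩
    have := hrel s j (j + 1) (by omega) hj rfl
    rwa [submatrix_cast_self'] at this
  · intro hx
    refine ⟨fun s j j' hj hj' hc => ?_, fun s => (hx s (Set.mem_univ s)).2⟩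
    rcases lt_trichotomy j' (j + 1) with h | h | h
    · have := Q.path_along s (j + 1) j' h (by omega)
      rw [hc] at this
      exact absurd this (hQ _)
    · subst h
      have := (hx s (Set.mem_univ s)).1 j hj'
      rwa [submatrix_cast_self']
    · have := Q.path_along s j' (j + 1) h (by omega)
      rw [hc] at this
      exact absurd this (hQ _)
end

section
/- The semigroup ring k[U] of the matching semigroup U(Q, c, β, r) is the ring of invariants of a polynomial ring k[X_a : a ∈ Q_1] under an action of a torus (k*)^S, where S is the set of strings of the PEG and (t_s) acts on the monomial ∏ X_a^{u(a)} by the character t_s^{φ_u(e_1^{(s)}) − φ_u(e_2^{(s)})}. Hence k[U] is the coordinate ring of an affine toric variety. -/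
open scoped Classical

namespace CQuiv

variable (Q : CQuiv) (β : Q.V → ℕ)

/-- The (0/1) coefficient of `u a` in the linear function `φ_u(e)`. -/
noncomputable def cCoef (r : Q.Arrow → ℕ) (e : Q.Root) (a : Q.Arrow) : ℕ :=
  (if Q.Coupled e.1 ∧ e.2.2 = Q.rOut r e.1 e.2.1 ∧ a.1 = e.2.1 ∧ Q.tail a = e.1
    then 1 else 0) +
  (if Q.Coupled e.1 ∧ e.2.2 + Q.rIn r e.1 e.2.1 = β e.1 ∧ a.1 = e.2.1 ∧ Q.head a = e.1
    then 1 else 0)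

end CQuiv


lemma units_exp_zero {k : Type} [Field k] [Infinite k] (n : ℤ) (h : ∀ c : kˣ, c ^ n = 1) :
    n = 0 := by
  by_contra hn
  have hm : 0 < n.natAbs := Int.natAbs_pos.mpr hn
  have hfin : ({x : k | x ^ n.natAbs = 1} ∪ {0}).Finite := by
    refine Set.Finite.union ?_ (Set.finite_singleton 0)
    have hp : (Polynomial.X ^ n.natAbs - Polynomial.C (1:k)) ≠ 0 :=
      Polynomial.X_pow_sub_C_ne_zero hm 1
    refine (Polynomial.finite_setOf_isRoot hp).subset ?_
    intro x hx
    simp only [Set.mem_setOf_eq] at hx ⊢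
    simp [Polynomial.IsRoot, hx]
  obtain ⟨x, hx⟩ := hfin.infinite_compl.nonempty
  simp only [Set.mem_compl_iff, Set.mem_union, Set.mem_setOf_eq, Set.mem_singleton_iff,
    not_or] at hx
  set c : kˣ := Units.mk0 x hx.2
  have hc : c ^ (n.natAbs : ℤ) = 1 := by
    rcases Int.natAbs_eq n with he | he
    · rw [← he]; exact h c
    · have hcn := h c
      rw [he, zpow_neg, inv_eq_one] at hcn
      exact hcn
  rw [zpow_natCast] at hc
  exact hx.1 (by simpa [c] using congrArg Units.val hc)

lemma zpow_sum'' {G : Type*} [CommGroup G] (x : G) {ι : Type*} (s : Finset ι) (f : ι → ℤ) :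
    x ^ (∑ i ∈ s, f i) = ∏ i ∈ s, x ^ f i := by
  induction s using Finset.induction with
  | empty => simp
  | insert _ _ h ih => rw [Finset.sum_insert h, Finset.prod_insert h, zpow_add, ih]

open MvPolynomial in
lemma aeval_scale {k : Type} [CommSemiring k] {σ : Type} (c : σ → k) (v : σ →₀ ℕ) (b : k) :
    aeval (fun a => C (c a) * X a) (monomial v b) =
      C (v.prod fun a e => c a ^ e) * monomial v b := by
  rw [aeval_monomial, map_finsuppProd (C : k →+* MvPolynomial σ k)]
  simp only [mul_pow, ← C_pow]
  rw [Finsupp.prod_mul, monomial_eq, algebraMap_eq]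
  ring

open MvPolynomial in
lemma aux_inv_iff_span {σ : Type} [Fintype σ] {k : Type} [Field k] [Infinite k]
    {ι : Type} [Fintype ι] (d : ι → σ → ℤ) (U : Set (σ → ℕ))
    (hU : ∀ v : σ →₀ ℕ, (⇑v ∈ U) ↔ ∀ s, ∑ a, d s a * (v a : ℤ) = 0) :
    ∀ f : MvPolynomial σ k,
      (∀ t : ι → kˣ,
        aeval (fun a => C ((↑(∏ s, t s ^ d s a)) : k) * X a) f = f) ↔
      f ∈ Submodule.span k
        {mo : MvPolynomial σ k | ∃ u : σ →₀ ℕ, ⇑u ∈ U ∧ mo = monomial u (1 : k)} := by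
  classical
  set χ : (ι → kˣ) → (σ →₀ ℕ) → kˣ := fun t v => ∏ s, t s ^ (∑ a, d s a * (v a : ℤ)) with hχ
  have scal_eq : ∀ (t : ι → kˣ) (v : σ →₀ ℕ),
      (v.prod fun a e => ((↑(∏ s, t s ^ d s a) : k)) ^ e) = ((χ t v : kˣ) : k) := by
    intro t v
    have h1 : (v.prod fun a e => ((↑(∏ s, t s ^ d s a) : k)) ^ e)
        = (((v.prod fun a e => (∏ s, t s ^ d s a) ^ e : kˣ)) : k) := by
      simp only [Finsupp.prod]
      push_cast
      rfl
    rw [h1]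
    congr 1
    rw [Finsupp.prod_fintype _ _ (fun _ => pow_zero _)]
    have h2 : ∀ a : σ, (∏ s, t s ^ d s a) ^ (v a) = ∏ s, t s ^ (d s a * (v a : ℤ)) := by
      intro a
      rw [← Finset.prod_pow]
      exact Finset.prod_congr rfl fun s _ => by rw [← zpow_natCast (t s ^ d s a), ← zpow_mul]
    simp_rw [h2]
    rw [Finset.prod_comm, hχ]
    exact Finset.prod_congr rfl fun s _ => (zpow_sum'' _ _ _).symm
  have act_mon : ∀ (t : ι → kˣ) (v : σ →₀ ℕ) (b : k),
      aeval (fun a => C ((↑(∏ s, t s ^ d s a)) : k) * X a) (monomial v b) =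
        monomial v ((χ t v : k) * b) := by
    intro t v b
    rw [aeval_scale, scal_eq, C_mul_monomial]
  have coeff_act : ∀ (t : ι → kˣ) (f : MvPolynomial σ k) (w : σ →₀ ℕ),
      coeff w (aeval (fun a => C ((↑(∏ s, t s ^ d s a)) : k) * X a) f)
        = (χ t w : k) * coeff w f := by
    intro t f w
    conv_lhs => rw [← support_sum_monomial_coeff f]
    rw [map_sum]
    simp_rw [act_mon]
    rw [coeff_sum]
    simp only [coeff_monomial]
    rw [Finset.sum_ite_eq' f.support w]
    by_cases hw : w ∈ f.support
    · rw [if_pos hw]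
    · rw [if_neg hw, notMem_support_iff.mp hw, mul_zero]
  have inv_iff : ∀ f : MvPolynomial σ k,
      (∀ t : ι → kˣ, aeval (fun a => C ((↑(∏ s, t s ^ d s a)) : k) * X a) f = f) ↔
        ∀ v ∈ f.support, ∀ t, χ t v = 1 := by
    intro f
    constructor
    · intro h v hv t
      have h1 := congrArg (coeff v) (h t)
      rw [coeff_act] at h1
      have hc : coeff v f ≠ 0 := mem_support_iff.mp hv
      have h2 : (χ t v : k) = 1 := by
        have := mul_right_cancel₀ hc (h1.trans (one_mul (coeff v f)).symm)
        exact this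
      exact Units.ext (by simpa using h2)
    · intro h t
      apply MvPolynomial.ext
      intro w
      rw [coeff_act]
      by_cases hw : w ∈ f.support
      · rw [h w hw t]; simp
      · rw [notMem_support_iff.mp hw, mul_zero]
  have mem_iff : ∀ v : σ →₀ ℕ, (∀ t : ι → kˣ, χ t v = 1) ↔ (⇑v ∈ U) := by
    intro v
    rw [hU]
    constructor
    · intro h s₀
      apply units_exp_zero (k := k)
      intro c
      have h1 := h (fun s => if s = s₀ then c else 1)
      rw [hχ] at h1
      simp only at h1
      rw [Finset.prod_eq_single s₀ (fun s _ hs => by simp [hs]) (by simp)] at h1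
      simpa using h1
    · intro h t
      rw [hχ]
      apply Finset.prod_eq_one
      intro s _
      rw [h s, zpow_zero]
  intro f
  rw [inv_iff]
  constructor
  · intro h
    have hmem : (∑ v ∈ f.support, monomial v (coeff v f)) ∈ Submodule.span k
        {mo : MvPolynomial σ k | ∃ u : σ →₀ ℕ, ⇑u ∈ U ∧ mo = monomial u (1 : k)} := by
      apply Submodule.sum_mem
      intro v hv
      have h1 : monomial v (coeff v f) = (coeff v f) • monomial v (1 : k) := by
        rw [smul_monomial, smul_eq_mul, mul_one]
      rw [h1]
      exact Submodule.smul_mem _ _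
        (Submodule.subset_span ⟨v, (mem_iff v).1 (h v hv), rfl⟩)
    rwa [support_sum_monomial_coeff] at hmem
  · intro hspan v hv t
    have hall : ∀ w, (χ t w : k) * coeff w f = coeff w f := by
      intro w
      refine Submodule.span_induction
        (p := fun g _ => (χ t w : k) * coeff w g = coeff w g)
        ?_ (by simp) (fun a b _ _ ha hb => by
          show (χ t w : k) * coeff w (a + b) = coeff w (a + b)
          rw [coeff_add, mul_add, ha, hb])
        (fun c a _ ha => by
          show (χ t w : k) * coeff w (c • a) = coeff w (c • a)
          rw [coeff_smul, smul_eq_mul, ← mul_assoc, mul_comm ((χ t w : k)) c,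
            mul_assoc, ha]) hspan
      · rintro g ⟨u, hu, rfl⟩
        by_cases hwu : w = u
        · subst hwu
          rw [(mem_iff w).2 hu t]
          simp
        · rw [coeff_monomial, if_neg (Ne.symm hwu), mul_zero]
    have h1 := hall v
    have hc : coeff v f ≠ 0 := mem_support_iff.mp hv
    exact Units.ext (by simpa using mul_right_cancel₀ hc (h1.trans (one_mul _).symm))


lemma sum_arrow_out (Q : CQuiv) [Fintype Q.S] (u : Q.Arrow → ℕ) (x : Q.V) (s : Q.S) :
    ∑ a : Q.Arrow, (if a.1 = s ∧ Q.tail a = x then u a else 0) = Q.rOut u x s := by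
  classical
  have hsig : ∀ g : Q.Arrow → ℕ,
      ∑ a : Q.Arrow, g a = ∑ s' : Q.S, ∑ j : Fin (Q.len s'), g ⟨s', j⟩ := by
    intro g
    have h2 := Finset.sum_sigma (Finset.univ : Finset Q.S)
      (fun s' => (Finset.univ : Finset (Fin (Q.len s')))) g
    rw [Finset.univ_sigma_univ] at h2
    exact h2
  rw [hsig, CQuiv.rOut, Finset.sum_eq_single s]
  · apply Finset.sum_congr rfl; intro j _; simp
  · intro s' _ hs'; apply Finset.sum_eq_zero; intro j _; simp [hs']
  · simp

lemma sum_arrow_in (Q : CQuiv) [Fintype Q.S] (u : Q.Arrow → ℕ) (x : Q.V) (s : Q.S) :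
    ∑ a : Q.Arrow, (if a.1 = s ∧ Q.head a = x then u a else 0) = Q.rIn u x s := by
  classical
  have hsig : ∀ g : Q.Arrow → ℕ,
      ∑ a : Q.Arrow, g a = ∑ s' : Q.S, ∑ j : Fin (Q.len s'), g ⟨s', j⟩ := by
    intro g
    have h2 := Finset.sum_sigma (Finset.univ : Finset Q.S)
      (fun s' => (Finset.univ : Finset (Fin (Q.len s')))) g
    rw [Finset.univ_sigma_univ] at h2
    exact h2
  rw [hsig, CQuiv.rIn, Finset.sum_eq_single s]
  · apply Finset.sum_congr rfl; intro j _; simp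
  · intro s' _ hs'; apply Finset.sum_eq_zero; intro j _; simp [hs']
  · simp

lemma sumCoef (Q : CQuiv) [Fintype Q.S] (β : Q.V → ℕ) (r u : Q.Arrow → ℕ) (e : Q.Root) :
    ∑ a : Q.Arrow, Q.cCoef β r e a * u a = Q.phi β r u e := by
  classical
  unfold CQuiv.cCoef CQuiv.phi
  simp only [add_mul, ite_mul, one_mul, zero_mul]
  rw [Finset.sum_add_distrib]
  congr 1
  · by_cases hP : Q.Coupled e.1 ∧ e.2.2 = Q.rOut r e.1 e.2.1
    · rw [if_pos hP, ← sum_arrow_out Q u e.1 e.2.1]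
      apply Finset.sum_congr rfl
      intro a _
      by_cases h : a.1 = e.2.1 ∧ Q.tail a = e.1
      · rw [if_pos ⟨hP.1, hP.2, h.1, h.2⟩, if_pos h]
      · rw [if_neg (by tauto), if_neg h]
    · rw [if_neg hP]
      apply Finset.sum_eq_zero
      intro a _
      rw [if_neg (by tauto)]
  · by_cases hP : Q.Coupled e.1 ∧ e.2.2 + Q.rIn r e.1 e.2.1 = β e.1
    · rw [if_pos hP, ← sum_arrow_in Q u e.1 e.2.1]
      apply Finset.sum_congr rfl
      intro a _
      by_cases h : a.1 = e.2.1 ∧ Q.head a = e.1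
      · rw [if_pos ⟨hP.1, hP.2, h.1, h.2⟩, if_pos h]
      · rw [if_neg (by tauto), if_neg h]
    · rw [if_neg hP]
      apply Finset.sum_eq_zero
      intro a _
      rw [if_neg (by tauto)]


/-- `k[U]` is the invariant ring of the polynomial ring
`k[X_a : a ∈ Q₁]` under the torus `(kˣ)^S` (`S` = strings of the PEG, enumerated by
their endpoint pairs `E1 t`, `E2 t`), acting on a monomial `∏ X_a^{u a}` by the
character `∏_s t_s^{φ_u(e₁^{(s)}) - φ_u(e₂^{(s)})}`: a polynomial is invariant iff it
is a `k`-linear combination of monomials whose exponent vectors lie in `U`.  Hence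
`k[U]` is the coordinate ring of an affine toric variety. -/
theorem semigroup_ring_U_is_toric {Q : CQuiv} [Fintype Q.V] [Fintype Q.S]
    (β : Q.V → ℕ) (r : Q.Arrow → ℕ) (k : Type) [Field k] [IsAlgClosed k]
    (hQ : Q.Acyclic) (hmax : Q.IsMaxRankSeq β r)
    (T : Type) [Fintype T] (E1 E2 : T → Q.Root)
    (hend : ∀ t, Q.IsEndpoint β r (E1 t) ∧ Q.IsEndpoint β r (E2 t) ∧ E1 t ≠ E2 t ∧
      Q.PegConn β r (E1 t) (E2 t))
    (hinj : ∀ t t', Q.PegConn β r (E1 t) (E1 t') → t = t')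
    (hcov : ∀ p q, Q.IsEndpoint β r p → Q.IsEndpoint β r q → p ≠ q →
      Q.PegConn β r p q → ∃ t, (E1 t = p ∧ E2 t = q) ∨ (E1 t = q ∧ E2 t = p)) :
    ∀ f : MvPolynomial Q.Arrow k,
      (∀ t : T → kˣ,
        MvPolynomial.aeval (fun a : Q.Arrow =>
          MvPolynomial.C
            ((↑(∏ s : T, t s ^
              ((Q.cCoef β r (E1 s) a : ℤ) - (Q.cCoef β r (E2 s) a : ℤ))) : k)) *
          MvPolynomial.X a) f = f) ↔
      f ∈ Submodule.span k
        {mo : MvPolynomial Q.Arrow k | ∃ u : Q.Arrow →₀ ℕ,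
          (↑u : Q.Arrow → ℕ) ∈ Q.USet β r ∧ mo = MvPolynomial.monomial u (1 : k)} := by
  have hUiff : ∀ v : Q.Arrow →₀ ℕ, ((⇑v : Q.Arrow → ℕ) ∈ Q.USet β r) ↔
      ∀ s : T, ∑ a : Q.Arrow,
        ((Q.cCoef β r (E1 s) a : ℤ) - (Q.cCoef β r (E2 s) a : ℤ)) * (v a : ℤ) = 0 := by
    intro v
    have hsum : ∀ s : T, ∑ a : Q.Arrow,
        ((Q.cCoef β r (E1 s) a : ℤ) - (Q.cCoef β r (E2 s) a : ℤ)) * (v a : ℤ)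
        = (Q.phi β r ⇑v (E1 s) : ℤ) - (Q.phi β r ⇑v (E2 s) : ℤ) := by
      intro s
      rw [← sumCoef Q β r ⇑v (E1 s), ← sumCoef Q β r ⇑v (E2 s)]
      push_cast
      rw [← Finset.sum_sub_distrib]
      exact Finset.sum_congr rfl fun a _ => by ring
    constructor
    · intro hUv s
      rw [hsum s]
      have h1 := hUv (E1 s) (E2 s) (hend s).1 (hend s).2.1 (hend s).2.2.2
      simp [h1]
    · intro h p q hp hq hconn
      by_cases hpq : p = q
      · rw [hpq]
      · obtain ⟨s, hs⟩ := hcov p q hp hq hpq hconn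
        have h2 := h s
        rw [hsum s] at h2
        have h3 : Q.phi β r ⇑v (E1 s) = Q.phi β r ⇑v (E2 s) := by
          exact_mod_cast sub_eq_zero.mp h2
        rcases hs with ⟨e1, e2⟩ | ⟨e1, e2⟩
        · rw [e1, e2] at h3; exact h3
        · rw [e1, e2] at h3; exact h3.symm
  exact aux_inv_iff_span
    (fun s a => (Q.cCoef β r (E1 s) a : ℤ) - (Q.cCoef β r (E2 s) a : ℤ))
    (Q.USet β r) hUiff
end
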